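/- arXiv:0809.0078 — 2 statements merged into one kernel-verified Lean document; each statement's English description precedes it below -/
import Mathlib

section
/- Let τ : S_n(ℂ) → S_n(ℂ) be a bi-quantum channel with n ≥ 2, and suppose σ_2(τ) < 1. Then σ_1(τ) = 1 and the minimum output entropy satisfies H(τ) ≥ −(1/2) log(σ_2(τ)² + (1 − σ_2(τ)²)/n). -/
open scoped ComplexOrder
open Matrix Kronecker

/-- Frobenius norm of a complex matrix: `√(tr (X Xᴴ))`. -/
noncomputable def frobNorm {n m : Type*} [Fintype n] [Fintype m]
    (X : Matrix n m ℂ) : ℝ :=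
  Real.sqrt ((X * Xᴴ).trace.re)

/-- Operator norm `σ₁(τ) = ‖τ‖` of a map between spaces of Hermitian matrices,
with respect to the Frobenius norm. -/
noncomputable def opNorm {n m : Type*} [Fintype n] [Fintype m]
    (τ : Matrix n n ℂ → Matrix m m ℂ) : ℝ :=
  sSup {c : ℝ | ∃ X : Matrix n n ℂ, X.IsHermitian ∧ frobNorm X ≤ 1 ∧ c = frobNorm (τ X)}

/-- The second singular value of a map between spaces of Hermitian matrices, via the
Courant–Fischer min-max characterization: the infimum over nonzero Hermitian `U` of the
norm of `τ` restricted to the orthogonal complement of `U`. -/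
noncomputable def sigma2 {n m : Type*} [Fintype n] [Fintype m]
    (τ : Matrix n n ℂ → Matrix m m ℂ) : ℝ :=
  sInf {c : ℝ | ∃ U : Matrix n n ℂ, U.IsHermitian ∧ U ≠ 0 ∧
    c = sSup {d : ℝ | ∃ X : Matrix n n ℂ, X.IsHermitian ∧ frobNorm X ≤ 1 ∧
      (U * X).trace.re = 0 ∧ d = frobNorm (τ X)}}

/-- Largest eigenvalue `λ₁` of a Hermitian matrix (junk value `0` otherwise). -/
noncomputable def lambdaMax {n : Type*} [Fintype n] [DecidableEq n]
    (Y : Matrix n n ℂ) : ℝ :=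
  if hY : Y.IsHermitian then ⨆ i, hY.eigenvalues i else 0

/-- von Neumann entropy `H(Y) = -∑ λᵢ log λᵢ` of a Hermitian matrix
(junk value `0` otherwise); note `Real.log 0 = 0`. -/
noncomputable def entropy {n : Type*} [Fintype n] [DecidableEq n]
    (Y : Matrix n n ℂ) : ℝ :=
  if hY : Y.IsHermitian then -∑ i, hY.eigenvalues i * Real.log (hY.eigenvalues i) else 0

/-- Minimum output entropy of a channel: the infimum of `H(τ X)` over density matrices `X`. -/
noncomputable def minEntropy {n m : Type*} [Fintype n] [DecidableEq n] [Fintype m] [DecidableEq m]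
    (τ : Matrix n n ℂ → Matrix m m ℂ) : ℝ :=
  sInf {h : ℝ | ∃ X : Matrix n n ℂ, X.PosSemidef ∧ X.trace = 1 ∧ h = entropy (τ X)}

/-- Eigenvalues of a Hermitian matrix arranged in decreasing order:
`eigsDesc Y 0 = λ₁ ≥ eigsDesc Y 1 = λ₂ ≥ …` (junk value `0` if not Hermitian). -/
noncomputable def eigsDesc {n : ℕ} (Y : Matrix (Fin n) (Fin n) ℂ) : Fin n → ℝ :=
  if hY : Y.IsHermitian then fun i => hY.eigenvalues (Tuple.sort hY.eigenvalues i.rev)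
  else fun _ => 0

/-- The sum `λ₁ + ⋯ + λ_k` of the `k` largest eigenvalues of a Hermitian matrix. -/
noncomputable def sumTopEigs {n : ℕ} (k : ℕ) (Y : Matrix (Fin n) (Fin n) ℂ) : ℝ :=
  ∑ i : Fin n, if (i : ℕ) < k then eigsDesc Y i else 0

variable {n : ℕ}

noncomputable def toE (X : Matrix (Fin n) (Fin n) ℂ) : EuclideanSpace ℂ (Fin n × Fin n) :=
  WithLp.toLp 2 (fun p : Fin n × Fin n => X p.1 p.2)

lemma trace_eq_inner (X Y : Matrix (Fin n) (Fin n) ℂ) :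
    (X * Yᴴ).trace = inner ℂ (toE Y) (toE X) := by
  simp only [Matrix.trace, Matrix.diag, Matrix.mul_apply, Matrix.conjTranspose_apply]
  rw [PiLp.inner_apply]
  rw [← Finset.sum_product']
  simp [toE, mul_comm, RCLike.inner_apply]

lemma frob_eq_norm (X : Matrix (Fin n) (Fin n) ℂ) : frobNorm X = ‖toE X‖ := by
  rw [frobNorm, trace_eq_inner,
    show (inner ℂ (toE X) (toE X) : ℂ).re = ‖toE X‖ ^ 2 from inner_self_eq_norm_sq (𝕜 := ℂ) (toE X),
    Real.sqrt_sq (norm_nonneg _)]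

lemma norm_sq_eq_trace (M : Matrix (Fin n) (Fin n) ℂ) :
    ‖toE M‖ ^ 2 = (M * Mᴴ).trace.re := by
  rw [trace_eq_inner]
  exact (show (inner ℂ (toE M) (toE M) : ℂ).re = ‖toE M‖ ^ 2 from
    inner_self_eq_norm_sq (𝕜 := ℂ) (toE M)).symm

lemma contraction {l : ℕ} (A : Fin l → Matrix (Fin n) (Fin n) ℂ)
    (hA : ∑ i, (A i)ᴴ * A i = 1) (hA' : ∑ i, A i * (A i)ᴴ = 1)
    {X : Matrix (Fin n) (Fin n) ℂ} (hX : X.IsHermitian) :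
    frobNorm (∑ i, A i * X * (A i)ᴴ) ≤ frobNorm X := by
  have inner_eq : ∀ a : Fin l, ∑ b, (A a)ᴴ * (A b * (A b)ᴴ * A a) = (A a)ᴴ * A a := by
    intro a
    rw [show ∑ b, (A a)ᴴ * (A b * (A b)ᴴ * A a) = (A a)ᴴ * ((∑ b, A b * (A b)ᴴ) * A a) by
      rw [Matrix.sum_mul, Matrix.mul_sum], hA', one_mul]
  have htr : ((∑ i, A i * X * (A i)ᴴ) * (∑ i, A i * X * (A i)ᴴ)ᴴ).trace.re ≤
      (X * Xᴴ).trace.re := by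
    have expand : ((∑ i, A i * X * (A i)ᴴ) * (∑ i, A i * X * (A i)ᴴ)ᴴ).trace.re =
        ∑ i, ∑ j, ((A i * X * (A i)ᴴ) * (A j * X * (A j)ᴴ)ᴴ).trace.re := by
      rw [conjTranspose_sum, Finset.sum_mul_sum, Matrix.trace_sum, Complex.re_sum]
      refine Finset.sum_congr rfl fun i _ => ?_
      rw [Matrix.trace_sum, Complex.re_sum]
    have term_bound : ∀ i j, ((A i * X * (A i)ᴴ) * (A j * X * (A j)ᴴ)ᴴ).trace.re ≤
        (‖toE (X * (A i)ᴴ * A j)‖ ^ 2 + ‖toE ((A i)ᴴ * A j * X)‖ ^ 2) / 2 := by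
      intro i j
      have e1 : ((A i * X * (A i)ᴴ) * (A j * X * (A j)ᴴ)ᴴ).trace =
          ((X * (A i)ᴴ * A j) * ((A i)ᴴ * A j * X)ᴴ).trace := by
        have h1 : (A i * X * (A i)ᴴ) * (A j * X * (A j)ᴴ)ᴴ =
            A i * (X * ((A i)ᴴ * (A j * (X * (A j)ᴴ)))) := by
          simp [conjTranspose_mul, hX.eq, Matrix.mul_assoc]
        rw [h1, Matrix.trace_mul_comm]
        congr 1
        simp [conjTranspose_mul, hX.eq, Matrix.mul_assoc]
      calc ((A i * X * (A i)ᴴ) * (A j * X * (A j)ᴴ)ᴴ).trace.re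
          ≤ ‖((A i * X * (A i)ᴴ) * (A j * X * (A j)ᴴ)ᴴ).trace‖ := Complex.re_le_norm _
        _ = ‖(inner ℂ (toE ((A i)ᴴ * A j * X)) (toE (X * (A i)ᴴ * A j)) : ℂ)‖ := by
            rw [e1, trace_eq_inner]
        _ ≤ ‖toE ((A i)ᴴ * A j * X)‖ * ‖toE (X * (A i)ᴴ * A j)‖ := norm_inner_le_norm _ _
        _ ≤ (‖toE (X * (A i)ᴴ * A j)‖ ^ 2 + ‖toE ((A i)ᴴ * A j * X)‖ ^ 2) / 2 := by
            nlinarith [sq_nonneg (‖toE (X * (A i)ᴴ * A j)‖ - ‖toE ((A i)ᴴ * A j * X)‖)]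
    have hMsum : ∑ i, ∑ j, (‖toE (X * (A i)ᴴ * A j)‖ : ℝ) ^ 2 = (X * Xᴴ).trace.re := by
      have e2 : ∀ i j : Fin l, (X * (A i)ᴴ * A j) * (X * (A i)ᴴ * A j)ᴴ
          = X * (((A i)ᴴ * ((A j * (A j)ᴴ) * A i)) * X) := by
        intro i j
        simp [conjTranspose_mul, hX.eq, Matrix.mul_assoc]
      simp_rw [norm_sq_eq_trace, ← Complex.re_sum, ← Matrix.trace_sum, e2,
        ← Matrix.mul_sum, ← Matrix.sum_mul]
      simp_rw [inner_eq]
      rw [hA, one_mul, hX.eq]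
    have hNsum : ∑ i, ∑ j, (‖toE ((A i)ᴴ * A j * X)‖ : ℝ) ^ 2 = (X * Xᴴ).trace.re := by
      have e3 : ∀ i j : Fin l, ((A i)ᴴ * A j * X)ᴴ * ((A i)ᴴ * A j * X)
          = X * (((A j)ᴴ * ((A i * (A i)ᴴ) * A j)) * X) := by
        intro i j
        simp [conjTranspose_mul, hX.eq, Matrix.mul_assoc]
      have e4 : ∀ i j : Fin l, (((A i)ᴴ * A j * X) * ((A i)ᴴ * A j * X)ᴴ).trace
          = (((A i)ᴴ * A j * X)ᴴ * ((A i)ᴴ * A j * X)).trace := fun i j =>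
        Matrix.trace_mul_comm _ _
      simp_rw [norm_sq_eq_trace, e4, e3, ← Complex.re_sum, ← Matrix.trace_sum]
      rw [Finset.sum_comm]
      simp_rw [← Matrix.mul_sum, ← Matrix.sum_mul]
      simp_rw [inner_eq]
      rw [hA, one_mul, hX.eq]
    calc ((∑ i, A i * X * (A i)ᴴ) * (∑ i, A i * X * (A i)ᴴ)ᴴ).trace.re
        = ∑ i, ∑ j, ((A i * X * (A i)ᴴ) * (A j * X * (A j)ᴴ)ᴴ).trace.re := expand
      _ ≤ ∑ i, ∑ j, (‖toE (X * (A i)ᴴ * A j)‖ ^ 2 + ‖toE ((A i)ᴴ * A j * X)‖ ^ 2) / 2 :=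
          Finset.sum_le_sum fun i _ => Finset.sum_le_sum fun j _ => term_bound i j
      _ = ((∑ i, ∑ j, ‖toE (X * (A i)ᴴ * A j)‖ ^ 2)
            + (∑ i, ∑ j, ‖toE ((A i)ᴴ * A j * X)‖ ^ 2)) / 2 := by
          simp_rw [← Finset.sum_div, Finset.sum_add_distrib]
      _ = (X * Xᴴ).trace.re := by rw [hMsum, hNsum]; ring
  exact Real.sqrt_le_sqrt htr

section Channel
variable {l : ℕ} (A : Fin l → Matrix (Fin n) (Fin n) ℂ)

lemma tau_herm {X : Matrix (Fin n) (Fin n) ℂ} (hX : X.IsHermitian) :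
    (∑ i, A i * X * (A i)ᴴ).IsHermitian := by
  unfold Matrix.IsHermitian
  rw [conjTranspose_sum]
  refine Finset.sum_congr rfl fun i _ => ?_
  simp [conjTranspose_mul, hX.eq, Matrix.mul_assoc]

lemma tau_trace (hA : ∑ i, (A i)ᴴ * A i = 1) (X : Matrix (Fin n) (Fin n) ℂ) :
    (∑ i, A i * X * (A i)ᴴ).trace = X.trace := by
  rw [Matrix.trace_sum]
  have : ∀ i, (A i * X * (A i)ᴴ).trace = ((A i)ᴴ * A i * X).trace := by
    intro i
    rw [Matrix.trace_mul_comm, Matrix.mul_assoc]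
  simp_rw [this, ← Matrix.trace_sum, ← Matrix.sum_mul, hA, one_mul]

lemma tau_one (hA' : ∑ i, A i * (A i)ᴴ = 1) :
    ∑ i, A i * (1 : Matrix (Fin n) (Fin n) ℂ) * (A i)ᴴ = 1 := by
  simpa using hA'

lemma tau_smul (c : ℂ) (X : Matrix (Fin n) (Fin n) ℂ) :
    ∑ i, A i * (c • X) * (A i)ᴴ = c • ∑ i, A i * X * (A i)ᴴ := by
  rw [Finset.smul_sum]
  refine Finset.sum_congr rfl fun i _ => ?_
  rw [Matrix.mul_smul, Matrix.smul_mul]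

lemma tau_add (X Y : Matrix (Fin n) (Fin n) ℂ) :
    ∑ i, A i * (X + Y) * (A i)ᴴ = (∑ i, A i * X * (A i)ᴴ) + ∑ i, A i * Y * (A i)ᴴ := by
  rw [← Finset.sum_add_distrib]
  refine Finset.sum_congr rfl fun i _ => ?_
  rw [Matrix.mul_add, Matrix.add_mul]

lemma tau_zero : ∑ i, A i * (0 : Matrix (Fin n) (Fin n) ℂ) * (A i)ᴴ = 0 := by
  simp

lemma tau_psd {X : Matrix (Fin n) (Fin n) ℂ} (hX : X.PosSemidef) :
    (∑ i, A i * X * (A i)ᴴ).PosSemidef := by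
  classical
  refine Finset.sum_induction _ _ (fun a b ha hb => ha.add hb) Matrix.PosSemidef.zero
    fun i _ => hX.mul_mul_conjTranspose_same (A i)

end Channel

lemma herm_real_smul (c : ℝ) {X : Matrix (Fin n) (Fin n) ℂ} (hX : X.IsHermitian) :
    ((c : ℂ) • X).IsHermitian := by
  unfold Matrix.IsHermitian
  rw [conjTranspose_smul, hX.eq]
  norm_num

lemma frob_smul (c : ℝ) (X : Matrix (Fin n) (Fin n) ℂ) :
    frobNorm ((c : ℂ) • X) = |c| * frobNorm X := by
  have : toE ((c : ℂ) • X) = (c : ℂ) • toE X := rfl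
  rw [frob_eq_norm, this, norm_smul, frob_eq_norm]
  simp

lemma frob_nonneg (X : Matrix (Fin n) (Fin n) ℂ) : 0 ≤ frobNorm X :=
  Real.sqrt_nonneg _

lemma frob_eq_zero_iff {X : Matrix (Fin n) (Fin n) ℂ} : frobNorm X = 0 ↔ X = 0 := by
  rw [frob_eq_norm, norm_eq_zero]
  constructor
  · intro h
    ext i j
    have := congrArg (fun v => v (i, j)) h
    simpa [toE] using this
  · rintro rfl
    rfl

lemma frob_one : frobNorm (1 : Matrix (Fin n) (Fin n) ℂ) = Real.sqrt n := by
  rw [frobNorm]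
  simp

lemma pythagoras {X Y : Matrix (Fin n) (Fin n) ℂ} (h : (X * Yᴴ).trace.re = 0) :
    frobNorm (X + Y) ^ 2 = frobNorm X ^ 2 + frobNorm Y ^ 2 := by
  have hT : toE (X + Y) = toE X + toE Y := rfl
  rw [frob_eq_norm, frob_eq_norm, frob_eq_norm, hT]
  rw [norm_add_sq (𝕜 := ℂ)]
  have : RCLike.re (inner ℂ (toE X) (toE Y) : ℂ) = 0 := by
    have h2 : (Y * Xᴴ).trace = inner ℂ (toE X) (toE Y) := trace_eq_inner Y X
    have h3 : (Y * Xᴴ).trace.re = (X * Yᴴ).trace.re := by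
      rw [show Y * Xᴴ = (X * Yᴴ)ᴴ by simp [conjTranspose_mul], Matrix.trace_conjTranspose]
      simp [Complex.re, RCLike.re]
    rw [← h2]
    rw [show RCLike.re ((Y * Xᴴ).trace) = (Y * Xᴴ).trace.re from rfl, h3, h]
  rw [this]
  ring



section Main
variable {l : ℕ} (A : Fin l → Matrix (Fin n) (Fin n) ℂ)

lemma opnorm_eq_one (hn : 0 < n)
    (hA : ∑ i, (A i)ᴴ * A i = 1) (hA' : ∑ i, A i * (A i)ᴴ = 1) :
    opNorm (fun X => ∑ i, A i * X * (A i)ᴴ) = 1 := by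
  have hsn : (0 : ℝ) < Real.sqrt n := Real.sqrt_pos.mpr (by exact_mod_cast hn)
  set c : ℝ := (Real.sqrt n)⁻¹ with hc
  have hc0 : 0 < c := by positivity
  have hfs : frobNorm ((c : ℂ) • (1 : Matrix (Fin n) (Fin n) ℂ)) = 1 := by
    rw [frob_smul, frob_one, abs_of_pos hc0, hc, inv_mul_cancel₀ (ne_of_gt hsn)]
  have hmem : (1 : ℝ) ∈ {c : ℝ | ∃ X : Matrix (Fin n) (Fin n) ℂ, X.IsHermitian ∧
      frobNorm X ≤ 1 ∧ c = frobNorm ((fun X => ∑ i, A i * X * (A i)ᴴ) X)} := by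
    refine ⟨(c : ℂ) • 1, herm_real_smul c isHermitian_one, le_of_eq hfs, ?_⟩
    simp only
    rw [tau_smul, tau_one A hA', hfs]
  have hub : ∀ x ∈ {c : ℝ | ∃ X : Matrix (Fin n) (Fin n) ℂ, X.IsHermitian ∧
      frobNorm X ≤ 1 ∧ c = frobNorm ((fun X => ∑ i, A i * X * (A i)ᴴ) X)}, x ≤ 1 := by
    rintro x ⟨X, hX, hX1, rfl⟩
    exact le_trans (contraction A hA hA' hX) hX1
  exact le_antisymm (csSup_le ⟨1, hmem⟩ hub) (le_csSup ⟨1, hub⟩ hmem)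


lemma one_mat_ne_zero (hn : 0 < n) : (1 : Matrix (Fin n) (Fin n) ℂ) ≠ 0 := by
  intro h
  have := congrFun (congrFun h ⟨0, hn⟩) ⟨0, hn⟩
  simpa using this

lemma T_bdd (hA : ∑ i, (A i)ᴴ * A i = 1) (hA' : ∑ i, A i * (A i)ᴴ = 1)
    (U : Matrix (Fin n) (Fin n) ℂ) :
    ∀ d ∈ {d : ℝ | ∃ X : Matrix (Fin n) (Fin n) ℂ, X.IsHermitian ∧ frobNorm X ≤ 1 ∧
      (U * X).trace.re = 0 ∧ d = frobNorm ((fun X => ∑ i, A i * X * (A i)ᴴ) X)}, d ≤ 1 := by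
  rintro d ⟨X, hX, h1, _, rfl⟩
  exact le_trans (contraction A hA hA' hX) h1

lemma T_zero_mem (U : Matrix (Fin n) (Fin n) ℂ) :
    (0 : ℝ) ∈ {d : ℝ | ∃ X : Matrix (Fin n) (Fin n) ℂ, X.IsHermitian ∧ frobNorm X ≤ 1 ∧
      (U * X).trace.re = 0 ∧ d = frobNorm ((fun X => ∑ i, A i * X * (A i)ᴴ) X)} := by
  refine ⟨0, isHermitian_zero, ?_, by simp, ?_⟩
  · rw [frob_eq_zero_iff.mpr rfl]; norm_num
  · simp only [tau_zero]
    rw [frob_eq_zero_iff.mpr rfl]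

lemma sigma2_nonneg (hn : 0 < n)
    (hA : ∑ i, (A i)ᴴ * A i = 1) (hA' : ∑ i, A i * (A i)ᴴ = 1) :
    0 ≤ sigma2 (fun X => ∑ i, A i * X * (A i)ᴴ) ∧
    {c : ℝ | ∃ U : Matrix (Fin n) (Fin n) ℂ, U.IsHermitian ∧ U ≠ 0 ∧
      c = sSup {d : ℝ | ∃ X : Matrix (Fin n) (Fin n) ℂ, X.IsHermitian ∧ frobNorm X ≤ 1 ∧
        (U * X).trace.re = 0 ∧
        d = frobNorm ((fun X => ∑ i, A i * X * (A i)ᴴ) X)}}.Nonempty := by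
  have hne : {c : ℝ | ∃ U : Matrix (Fin n) (Fin n) ℂ, U.IsHermitian ∧ U ≠ 0 ∧
      c = sSup {d : ℝ | ∃ X : Matrix (Fin n) (Fin n) ℂ, X.IsHermitian ∧ frobNorm X ≤ 1 ∧
        (U * X).trace.re = 0 ∧
        d = frobNorm ((fun X => ∑ i, A i * X * (A i)ᴴ) X)}}.Nonempty := by
    exact ⟨_, 1, isHermitian_one, one_mat_ne_zero hn, rfl⟩
  refine ⟨le_csInf hne ?_, hne⟩
  rintro b ⟨U, hU, hU0, rfl⟩
  exact le_csSup ⟨1, T_bdd A hA hA' U⟩ (T_zero_mem A U)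


lemma traceless_bound (hn : 0 < n)
    (hA : ∑ i, (A i)ᴴ * A i = 1) (hA' : ∑ i, A i * (A i)ᴴ = 1)
    {Δ : Matrix (Fin n) (Fin n) ℂ} (hΔ : Δ.IsHermitian) (hΔt : Δ.trace = 0) :
    frobNorm (∑ i, A i * Δ * (A i)ᴴ) ≤
      sigma2 (fun X => ∑ i, A i * X * (A i)ᴴ) * frobNorm Δ := by
  by_cases hz : Δ = 0
  · subst hz
    rw [tau_zero, frob_eq_zero_iff.mpr rfl, mul_zero]
  have hD : 0 < frobNorm Δ :=
    lt_of_le_of_ne (frob_nonneg Δ) (fun h => hz (frob_eq_zero_iff.mp h.symm))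
  set fΔ := frobNorm Δ with hfΔ
  set t := frobNorm (∑ i, A i * Δ * (A i)ᴴ) with ht
  have ht0 : 0 ≤ t := frob_nonneg _
  have htle : t ≤ fΔ := contraction A hA hA' hΔ
  have hr : t / fΔ ≤ sigma2 (fun X => ∑ i, A i * X * (A i)ᴴ) := by
    refine le_csInf (sigma2_nonneg A hn hA hA').2 ?_
    rintro b ⟨U, hU, hU0, rfl⟩
    have hbdd : BddAbove {d : ℝ | ∃ X : Matrix (Fin n) (Fin n) ℂ, X.IsHermitian ∧
        frobNorm X ≤ 1 ∧ (U * X).trace.re = 0 ∧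
        d = frobNorm ((fun X => ∑ i, A i * X * (A i)ᴴ) X)} := ⟨1, T_bdd A hA hA' U⟩
    set β := (U * Δ).trace.re with hβdef
    by_cases hβ : β = 0
    · -- use X = fΔ⁻¹ • Δ
      refine le_csSup hbdd ⟨((fΔ⁻¹ : ℝ) : ℂ) • Δ, herm_real_smul _ hΔ, ?_, ?_, ?_⟩
      · rw [frob_smul, abs_of_pos (by positivity), ← hfΔ, inv_mul_cancel₀ (ne_of_gt hD)]
      · rw [Matrix.mul_smul, Matrix.trace_smul]
        simp only [smul_eq_mul, Complex.mul_re, Complex.ofReal_re, Complex.ofReal_im]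
        rw [← hβdef]
        rw [hβ]
        ring
      · simp only
        rw [tau_smul, frob_smul, abs_of_pos (by positivity), ← ht, div_eq_inv_mul]
    · -- use X = 1 + b2 • Δ with b2 = -α/β
      set α := U.trace.re with hαdef
      set b2 := -α / β with hb2
      set X := (1 : Matrix (Fin n) (Fin n) ℂ) + (b2 : ℂ) • Δ with hXdef
      have hXherm : X.IsHermitian := isHermitian_one.add (herm_real_smul b2 hΔ)
      have hcross1 : ((1 : Matrix (Fin n) (Fin n) ℂ) * ((b2 : ℂ) • Δ)ᴴ).trace.re = 0 := by
        rw [one_mul, conjTranspose_smul, hΔ.eq, Matrix.trace_smul, hΔt]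
        simp
      have hX2 : frobNorm X ^ 2 = n + b2 ^ 2 * fΔ ^ 2 := by
        rw [hXdef, pythagoras hcross1, frob_one, Real.sq_sqrt (Nat.cast_nonneg n),
          frob_smul, mul_pow, sq_abs]
      have hτΔt : (∑ i, A i * Δ * (A i)ᴴ).trace = 0 := by rw [tau_trace A hA, hΔt]
      have hτX : ∑ i, A i * X * (A i)ᴴ =
          (1 : Matrix (Fin n) (Fin n) ℂ) + (b2 : ℂ) • ∑ i, A i * Δ * (A i)ᴴ := by
        rw [hXdef, tau_add, tau_one A hA', tau_smul]
      have hcross2 : ((1 : Matrix (Fin n) (Fin n) ℂ)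
          * ((b2 : ℂ) • ∑ i, A i * Δ * (A i)ᴴ)ᴴ).trace.re = 0 := by
        rw [one_mul, conjTranspose_smul, (tau_herm A hΔ).eq, Matrix.trace_smul, hτΔt]
        simp
      have hτX2 : frobNorm (∑ i, A i * X * (A i)ᴴ) ^ 2 = n + b2 ^ 2 * t ^ 2 := by
        rw [hτX, pythagoras hcross2, frob_one, Real.sq_sqrt (Nat.cast_nonneg n),
          frob_smul, mul_pow, sq_abs, ← ht]
      have hXpos : 0 < frobNorm X := by
        have h1 : (0:ℝ) < n := by exact_mod_cast hn
        nlinarith [frob_nonneg X, sq_nonneg b2, sq_nonneg fΔ, sq_nonneg (b2 * fΔ)]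
      have hkey : t / fΔ * frobNorm X ≤ frobNorm (∑ i, A i * X * (A i)ᴴ) := by
        have hsq : (t / fΔ * frobNorm X) ^ 2 ≤ frobNorm (∑ i, A i * X * (A i)ᴴ) ^ 2 := by
          rw [mul_pow, div_pow, hX2, hτX2]
          rw [div_mul_eq_mul_div, div_le_iff₀ (by positivity)]
          have h1 : (0:ℝ) < n := by exact_mod_cast hn
          nlinarith [sq_nonneg b2, sq_nonneg t, mul_le_mul_of_nonneg_left
            (mul_le_mul htle htle ht0 (le_of_lt hD)) (le_of_lt h1)]
        have h0 : 0 ≤ t / fΔ * frobNorm X := by positivity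
        nlinarith [frob_nonneg (∑ i, A i * X * (A i)ᴴ)]
      have hUX : (U * X).trace.re = 0 := by
        rw [hXdef, Matrix.mul_add, Matrix.trace_add, Matrix.mul_smul, Matrix.trace_smul,
          mul_one]
        simp only [Complex.add_re, smul_eq_mul, Complex.mul_re, Complex.ofReal_re,
          Complex.ofReal_im]
        rw [← hαdef, ← hβdef]
        have hb2β : b2 * β = -α := by rw [hb2]; exact div_mul_cancel₀ _ hβ
        linarith
      refine le_trans ?_ (le_csSup hbdd
        ⟨((((frobNorm X)⁻¹ : ℝ)) : ℂ) • X, herm_real_smul _ hXherm, ?_, ?_, rfl⟩)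
      · have h5 : t / fΔ ≤ (frobNorm X)⁻¹ * frobNorm (∑ i, A i * X * (A i)ᴴ) := by
          calc t / fΔ = (frobNorm X)⁻¹ * (t / fΔ * frobNorm X) := by
                rw [mul_comm ((frobNorm X)⁻¹) (t / fΔ * frobNorm X), mul_assoc,
                  mul_inv_cancel₀ (ne_of_gt hXpos), mul_one]
            _ ≤ _ := mul_le_mul_of_nonneg_left hkey (inv_nonneg.mpr hXpos.le)
        refine le_trans h5 (le_of_eq ?_)
        simp only
        rw [tau_smul, frob_smul, abs_of_pos (inv_pos.mpr hXpos)]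
      · rw [frob_smul, abs_of_pos (inv_pos.mpr hXpos), inv_mul_cancel₀ (ne_of_gt hXpos)]
      · rw [Matrix.mul_smul, Matrix.trace_smul]
        simp only [smul_eq_mul, Complex.mul_re, Complex.ofReal_re, Complex.ofReal_im, hUX]
        ring
  calc t = t / fΔ * fΔ := by field_simp
    _ ≤ _ := by
        apply mul_le_mul_of_nonneg_right hr (le_of_lt hD)

end Main

section Eigs
variable {Y : Matrix (Fin n) (Fin n) ℂ}

lemma conj_trace (Uu : Matrix (Fin n) (Fin n) ℂ) (hUu : star Uu * Uu = 1)
    (D : Matrix (Fin n) (Fin n) ℂ) : (Uu * D * star Uu).trace = D.trace := by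
  rw [Matrix.trace_mul_comm, ← Matrix.mul_assoc, hUu, one_mul]

lemma trace_eq_sum_eigs (hY : Y.IsHermitian) :
    Y.trace = ((∑ i, hY.eigenvalues i : ℝ) : ℂ) := by
  conv_lhs => rw [hY.spectral_theorem]
  rw [Unitary.conjStarAlgAut_apply]
  rw [conj_trace _ (mem_unitaryGroup_iff'.mp (hY.eigenvectorUnitary).2) _]
  rw [Matrix.trace_diagonal]
  push_cast
  rfl

lemma trace_sq_eq_sum_sq (hY : Y.IsHermitian) :
    (Y * Y).trace = ((∑ i, hY.eigenvalues i ^ 2 : ℝ) : ℂ) := by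
  have hUu := mem_unitaryGroup_iff'.mp (hY.eigenvectorUnitary).2
  set Uu := (hY.eigenvectorUnitary : Matrix (Fin n) (Fin n) ℂ)
  set D := Matrix.diagonal ((fun (r:ℝ) => (r:ℂ)) ∘ hY.eigenvalues) with hD
  have h1 : Y * Y = Uu * (D * D) * star Uu := by
    conv_lhs => rw [hY.spectral_theorem]
    calc (Uu * D * star Uu) * (Uu * D * star Uu)
        = Uu * (D * ((star Uu * Uu) * (D * star Uu))) := by
          simp only [Matrix.mul_assoc]
      _ = Uu * (D * D) * star Uu := by
          rw [hUu, one_mul]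
          simp only [Matrix.mul_assoc]
  rw [h1, conj_trace _ hUu, hD, Matrix.diagonal_mul_diagonal, Matrix.trace_diagonal]
  push_cast
  simp [pow_two]

lemma frob_sq (Z : Matrix (Fin n) (Fin n) ℂ) : frobNorm Z ^ 2 = (Z * Zᴴ).trace.re := by
  rw [frob_eq_norm, norm_sq_eq_trace]

lemma trace_sq_le_one {X : Matrix (Fin n) (Fin n) ℂ} (hX : X.PosSemidef)
    (htr : X.trace = 1) : (X * X).trace.re ≤ 1 := by
  have h1 : ∑ i, hX.isHermitian.eigenvalues i = 1 := by
    have := trace_eq_sum_eigs hX.isHermitian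
    rw [htr] at this
    exact_mod_cast this.symm
  have h2 : (X * X).trace.re = ∑ i, hX.isHermitian.eigenvalues i ^ 2 := by
    rw [trace_sq_eq_sum_sq hX.isHermitian]
    exact_mod_cast rfl
  rw [h2, ← h1]
  refine Finset.sum_le_sum fun i _ => ?_
  have h3 : hX.isHermitian.eigenvalues i ≤ 1 := by
    rw [← h1]
    exact Finset.single_le_sum (fun j _ => hX.eigenvalues_nonneg j) (Finset.mem_univ i)
  nlinarith [hX.eigenvalues_nonneg i]

end Eigs



lemma entropy_ge {Y : Matrix (Fin n) (Fin n) ℂ} (hY : Y.PosSemidef) (htr : Y.trace = 1)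
    {B : ℝ} (hQB : (Y * Y).trace.re ≤ B) :
    -(1 / 2 : ℝ) * Real.log B ≤ entropy Y := by
  set μ := hY.isHermitian.eigenvalues with hμ
  have hμ0 : ∀ i, 0 ≤ μ i := fun i => hY.eigenvalues_nonneg i
  have hsum : ∑ i, μ i = 1 := by
    have := trace_eq_sum_eigs hY.isHermitian
    rw [htr] at this
    exact_mod_cast this.symm
  have hQ : (Y * Y).trace.re = ∑ i, μ i ^ 2 := by
    rw [trace_sq_eq_sum_sq hY.isHermitian]
    exact_mod_cast rfl
  set Q := ∑ i, μ i ^ 2 with hQdef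
  have hQpos : 0 < Q := by
    have hex : ∃ i, μ i ≠ 0 := by
      by_contra h
      push_neg at h
      rw [Finset.sum_congr rfl fun i _ => h i] at hsum
      simp at hsum
    obtain ⟨i, hi⟩ := hex
    have h1 : 0 < μ i ^ 2 := by positivity
    calc (0:ℝ) < μ i ^ 2 := h1
      _ ≤ Q := Finset.single_le_sum (fun j _ => sq_nonneg (μ j)) (Finset.mem_univ i)
  set M := Real.sqrt Q with hM
  have hMpos : 0 < M := Real.sqrt_pos.mpr hQpos
  have hle : ∀ i, μ i ≤ M := by
    intro i
    have h1 : μ i ^ 2 ≤ Q := Finset.single_le_sum (fun j _ => sq_nonneg (μ j))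
      (Finset.mem_univ i)
    calc μ i = Real.sqrt (μ i ^ 2) := (Real.sqrt_sq (hμ0 i)).symm
      _ ≤ M := Real.sqrt_le_sqrt h1
  have hterm : ∀ i, μ i * Real.log (μ i) ≤ μ i * Real.log M := by
    intro i
    rcases eq_or_lt_of_le (hμ0 i) with h | h
    · rw [← h]; ring_nf; exact le_refl _
    · exact mul_le_mul_of_nonneg_left (Real.log_le_log h (hle i)) (hμ0 i)
  have hEnt : entropy Y = -∑ i, μ i * Real.log (μ i) := by
    rw [entropy, dif_pos hY.isHermitian]
  rw [hEnt]
  have h2 : ∑ i, μ i * Real.log (μ i) ≤ Real.log M := by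
    calc ∑ i, μ i * Real.log (μ i) ≤ ∑ i, μ i * Real.log M :=
          Finset.sum_le_sum fun i _ => hterm i
      _ = Real.log M := by rw [← Finset.sum_mul, hsum, one_mul]
  have h3 : Real.log M = (1/2 : ℝ) * Real.log Q := by
    rw [hM, Real.log_sqrt (le_of_lt hQpos)]
    ring
  have h4 : Real.log Q ≤ Real.log B := Real.log_le_log hQpos (by rw [← hQ]; exact hQB)
  have h5 : ∑ i, μ i * Real.log (μ i) ≤ (1/2 : ℝ) * Real.log B := by
    calc ∑ i, μ i * Real.log (μ i) ≤ Real.log M := h2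
      _ = (1/2 : ℝ) * Real.log Q := h3
      _ ≤ (1/2 : ℝ) * Real.log B := by linarith
  linarith

lemma psd_smul_one (hn : 0 < n) :
    ((((n:ℝ)⁻¹ : ℝ) : ℂ) • (1 : Matrix (Fin n) (Fin n) ℂ)).PosSemidef := by
  have h1 : ((((n:ℝ)⁻¹ : ℝ) : ℂ)) • (1 : Matrix (Fin n) (Fin n) ℂ)
      = Matrix.diagonal (fun _ => (((n:ℝ)⁻¹ : ℝ) : ℂ)) := by
    ext i j
    by_cases h : i = j <;> simp [Matrix.one_apply, Matrix.diagonal_apply, h]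
  rw [h1]
  refine Matrix.PosSemidef.diagonal ?_
  intro i
  simp only [Pi.zero_apply]
  rw [← Complex.ofReal_zero, Complex.real_le_real]
  positivity

lemma trace_smul_one (hn : 0 < n) :
    ((((n:ℝ)⁻¹ : ℝ) : ℂ) • (1 : Matrix (Fin n) (Fin n) ℂ)).trace = 1 := by
  have hne : ((n:ℕ) : ℂ) ≠ 0 := by exact_mod_cast hn.ne'
  rw [Matrix.trace_smul, Matrix.trace_one, smul_eq_mul, Fintype.card_fin]
  rw [show (((n:ℝ)⁻¹ : ℝ) : ℂ) = ((n:ℂ))⁻¹ by push_cast; rfl]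
  exact inv_mul_cancel₀ hne

theorem stmt_16' {l : ℕ} (hn : 2 ≤ n) (A : Fin l → Matrix (Fin n) (Fin n) ℂ)
    (hA : ∑ i, (A i)ᴴ * A i = 1) (hA' : ∑ i, A i * (A i)ᴴ = 1)
    (s : ℝ) (hs : s = sigma2 (fun X => ∑ i, A i * X * (A i)ᴴ))
    (hs1 : s < 1) :
    opNorm (fun X => ∑ i, A i * X * (A i)ᴴ) = 1 ∧
    -(1 / 2 : ℝ) * Real.log (s ^ 2 + (1 - s ^ 2) / n) ≤
      minEntropy (fun X => ∑ i, A i * X * (A i)ᴴ) := by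
  have hn0 : 0 < n := by omega
  have hnR : (0:ℝ) < n := by exact_mod_cast hn0
  have hs0 : 0 ≤ s := hs ▸ (sigma2_nonneg A hn0 hA hA').1
  set c : ℝ := (n:ℝ)⁻¹ with hcdef
  have hc0 : 0 < c := by positivity
  have hcn : c * n = 1 := inv_mul_cancel₀ (ne_of_gt hnR)
  refine ⟨opnorm_eq_one A hn0 hA hA', ?_⟩
  rw [minEntropy]
  refine le_csInf ⟨entropy ((fun X => ∑ i, A i * X * (A i)ᴴ) ((c:ℂ) • 1)),
    (c:ℂ) • 1, psd_smul_one hn0, trace_smul_one hn0, rfl⟩ ?_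
  rintro h ⟨X, hXpsd, hXtr, rfl⟩
  have hXh : X.IsHermitian := hXpsd.isHermitian
  refine entropy_ge (tau_psd A hXpsd) (by rw [tau_trace A hA, hXtr]) ?_
  -- main quadratic estimate
  set Δ : Matrix (Fin n) (Fin n) ℂ := X - (c:ℂ) • 1 with hΔdef
  have hΔh : Δ.IsHermitian := hXh.sub (herm_real_smul c isHermitian_one)
  have hΔtr : Δ.trace = 0 := by
    rw [hΔdef, Matrix.trace_sub, hXtr, Matrix.trace_smul, Matrix.trace_one, smul_eq_mul,
      Fintype.card_fin]
    rw [show ((c : ℝ) : ℂ) * (n : ℂ) = ((c * n : ℝ) : ℂ) by push_cast; ring, hcn]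
    norm_num
  have hXdec : X = Δ + (c:ℂ) • 1 := by rw [hΔdef]; abel
  have hτX : ∑ i, A i * X * (A i)ᴴ
      = (∑ i, A i * Δ * (A i)ᴴ) + (c:ℂ) • (1 : Matrix (Fin n) (Fin n) ℂ) := by
    conv_lhs => rw [hXdec]
    rw [tau_add, tau_smul, tau_one A hA']
  have hτΔtr : (∑ i, A i * Δ * (A i)ᴴ).trace = 0 := by rw [tau_trace A hA, hΔtr]
  have hτΔh : (∑ i, A i * Δ * (A i)ᴴ).IsHermitian := tau_herm A hΔh
  -- Pythagoras for τX
  have hcross1 : ((∑ i, A i * Δ * (A i)ᴴ)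
      * ((c:ℂ) • (1 : Matrix (Fin n) (Fin n) ℂ))ᴴ).trace.re = 0 := by
    rw [conjTranspose_smul, conjTranspose_one, Matrix.mul_smul, mul_one, Matrix.trace_smul,
      hτΔtr]
    simp
  have hone : frobNorm ((c:ℂ) • (1 : Matrix (Fin n) (Fin n) ℂ)) ^ 2 = c := by
    rw [frob_smul, frob_one, mul_pow, sq_abs, Real.sq_sqrt (le_of_lt hnR)]
    nlinarith [hcn]
  have hτsq : frobNorm (∑ i, A i * X * (A i)ᴴ) ^ 2
      = frobNorm (∑ i, A i * Δ * (A i)ᴴ) ^ 2 + c := by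
    rw [hτX, pythagoras hcross1, hone]
  -- Pythagoras for X
  have hcross2 : (Δ * ((c:ℂ) • (1 : Matrix (Fin n) (Fin n) ℂ))ᴴ).trace.re = 0 := by
    rw [conjTranspose_smul, conjTranspose_one, Matrix.mul_smul, mul_one, Matrix.trace_smul,
      hΔtr]
    simp
  have hXsq : frobNorm X ^ 2 = frobNorm Δ ^ 2 + c := by
    conv_lhs => rw [hXdec]
    rw [pythagoras hcross2, hone]
  have hX1 : frobNorm X ^ 2 ≤ 1 := by
    rw [frob_sq, hXh.eq]
    exact trace_sq_le_one hXpsd hXtr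
  have htb : frobNorm (∑ i, A i * Δ * (A i)ᴴ) ≤ s * frobNorm Δ := by
    rw [hs]
    exact traceless_bound A hn0 hA hA' hΔh hΔtr
  -- assemble
  have e0 : ((∑ i, A i * X * (A i)ᴴ) * (∑ i, A i * X * (A i)ᴴ)).trace.re
      = frobNorm (∑ i, A i * X * (A i)ᴴ) ^ 2 := by
    rw [frob_sq, (tau_herm A hXh).eq]
  rw [e0, hτsq]
  have h1 : frobNorm (∑ i, A i * Δ * (A i)ᴴ) ^ 2 ≤ (s * frobNorm Δ) ^ 2 :=
    pow_le_pow_left₀ (frob_nonneg _) htb 2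
  have h2 : frobNorm Δ ^ 2 ≤ 1 - c := by linarith
  have h3 : s ^ 2 * (frobNorm Δ ^ 2) ≤ s ^ 2 * (1 - c) :=
    mul_le_mul_of_nonneg_left h2 (sq_nonneg s)
  have hgoal : s ^ 2 + (1 - s ^ 2) / (n:ℝ) = s ^ 2 * (1 - c) + c := by
    rw [hcdef]
    field_simp
    ring
  rw [hgoal]
  nlinarith [h1, h3, sq_nonneg (frobNorm Δ)]

/-- Let τ : Sₙ(ℂ) → Sₙ(ℂ) be a bi-quantum channel (∑ᵢ Aᵢ* Aᵢ = I and
∑ᵢ Aᵢ Aᵢ* = I) with n ≥ 2, and suppose σ₂(τ) < 1.  Then σ₁(τ) = 1 and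
H(τ) ≥ -(1/2) log(σ₂(τ)² + (1 - σ₂(τ)²)/n). -/
theorem stmt_16 {n l : ℕ} (hn : 2 ≤ n) (A : Fin l → Matrix (Fin n) (Fin n) ℂ)
    (hA : ∑ i, (A i)ᴴ * A i = 1) (hA' : ∑ i, A i * (A i)ᴴ = 1)
    (s : ℝ) (hs : s = sigma2 (fun X => ∑ i, A i * X * (A i)ᴴ))
    (hs1 : s < 1) :
    opNorm (fun X => ∑ i, A i * X * (A i)ᴴ) = 1 ∧
    -(1 / 2 : ℝ) * Real.log (s ^ 2 + (1 - s ^ 2) / n) ≤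
      minEntropy (fun X => ∑ i, A i * X * (A i)ᴴ) := by
  exact stmt_16' hn A hA hA' s hs hs1
end

section
/- Let τ_1 : S_{n_1}(ℂ) → S_{n_1}(ℂ) and τ_2 : S_{n_2}(ℂ) → S_{n_2}(ℂ) be bi-quantum channels. Then the tensor product channel τ_1 ⊗ τ_2 is a bi-quantum channel, and σ_2(τ_1 ⊗ τ_2) = max(σ_2(τ_1), σ_2(τ_2)). -/
open scoped ComplexOrder
open Matrix Kronecker

set_option linter.unusedSectionVars false
namespace Stmt18Aux
open scoped InnerProductSpace

variable {n m : Type*} [Fintype n] [Fintype m]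

noncomputable def toEuc (X : Matrix n m ℂ) : EuclideanSpace ℂ (n × m) :=
  WithLp.toLp 2 (fun p : n × m => X p.1 p.2)

lemma toEuc_inner (X Y : Matrix n m ℂ) : ⟪toEuc X, toEuc Y⟫_ℂ = (Xᴴ * Y).trace := by
  simp only [PiLp.inner_apply, RCLike.inner_apply, toEuc, Matrix.trace, Matrix.diag_apply,
    Matrix.mul_apply, Matrix.conjTranspose_apply, Fintype.sum_prod_type, starRingEnd_apply,
    WithLp.ofLp_toLp]
  rw [Finset.sum_comm]
  exact Finset.sum_congr rfl fun _ _ => Finset.sum_congr rfl fun _ _ => mul_comm (G := ℂ) _ _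

lemma frob_eq (X : Matrix n m ℂ) : frobNorm X = ‖toEuc X‖ := by
  have h : ((toEuc X : EuclideanSpace ℂ (n × m)) |> fun v => (⟪v, v⟫_ℂ).re) = ‖toEuc X‖ ^ 2 :=
    inner_self_eq_norm_sq (𝕜 := ℂ) _
  have h2 : (X * Xᴴ).trace = (Xᴴ * X).trace := Matrix.trace_mul_comm X Xᴴ
  rw [frobNorm, h2, ← toEuc_inner]
  simp only at h
  rw [h, Real.sqrt_sq (norm_nonneg _)]

@[simp] lemma toEuc_zero : toEuc (0 : Matrix n m ℂ) = 0 := rfl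
lemma toEuc_add (X Y : Matrix n m ℂ) : toEuc (X + Y) = toEuc X + toEuc Y := rfl
lemma toEuc_sub (X Y : Matrix n m ℂ) : toEuc (X - Y) = toEuc X - toEuc Y := rfl
lemma toEuc_smul (c : ℂ) (X : Matrix n m ℂ) : toEuc (c • X) = c • toEuc X := rfl
lemma toEuc_eq_zero {X : Matrix n m ℂ} (h : toEuc X = 0) : X = 0 := by
  ext i j
  exact congrArg (fun v : EuclideanSpace ℂ (n × m) => v (i, j)) h

lemma frob_nonneg (X : Matrix n m ℂ) : 0 ≤ frobNorm X := by
  rw [frob_eq]; exact norm_nonneg _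
lemma frob_zero : frobNorm (0 : Matrix n m ℂ) = 0 := by simp [frob_eq]
lemma frob_pos {X : Matrix n m ℂ} (h : X ≠ 0) : 0 < frobNorm X := by
  rw [frob_eq]
  rcases (norm_nonneg (toEuc X)).lt_or_eq with h' | h'
  · exact h'
  · exact absurd (toEuc_eq_zero (norm_eq_zero.mp h'.symm)) h
lemma frob_smul (c : ℂ) (X : Matrix n m ℂ) : frobNorm (c • X) = ‖c‖ * frobNorm X := by
  rw [frob_eq, frob_eq, toEuc_smul, norm_smul]

end Stmt18Aux

namespace Stmt18Aux
open scoped InnerProductSpace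

lemma norm_sq_eq_re_inner {ι : Type*} [Fintype ι] (x : EuclideanSpace ℂ ι) :
    ‖x‖ ^ 2 = (⟪x, x⟫_ℂ).re := (inner_self_eq_norm_sq (𝕜 := ℂ) x).symm

lemma contraction {n l : Type*} [Fintype n] [DecidableEq n] [Fintype l]
    (B : l → Matrix n n ℂ)
    (h1 : ∑ i, (B i)ᴴ * B i = 1) (h2 : ∑ i, B i * (B i)ᴴ = 1)
    (X : Matrix n n ℂ) :
    frobNorm (∑ i, B i * X * (B i)ᴴ) ≤ frobNorm X := by
  classical
  set T := ∑ i, B i * X * (B i)ᴴ with hT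
  set C : l → l → Matrix n n ℂ := fun i j => (B j)ᴴ * B i with hC
  have key : (Tᴴ * T).trace
      = ∑ i, ∑ j, ((X * (C i j)ᴴ)ᴴ * ((C i j)ᴴ * X)).trace := by
    rw [hT, Matrix.conjTranspose_sum, Finset.sum_mul]
    rw [Matrix.trace_sum]
    refine Finset.sum_congr rfl fun i _ => ?_
    rw [Finset.mul_sum, Matrix.trace_sum]
    refine Finset.sum_congr rfl fun j _ => ?_
    calc ((B i * X * (B i)ᴴ)ᴴ * (B j * X * (B j)ᴴ)).trace
        = ((B i * Xᴴ * (B i)ᴴ * B j * X) * (B j)ᴴ).trace := by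
          simp only [Matrix.conjTranspose_mul, Matrix.conjTranspose_conjTranspose, mul_assoc]
      _ = ((B j)ᴴ * (B i * Xᴴ * (B i)ᴴ * B j * X)).trace := Matrix.trace_mul_comm _ _
      _ = ((X * (C i j)ᴴ)ᴴ * ((C i j)ᴴ * X)).trace := by
          simp only [hC, Matrix.conjTranspose_mul, Matrix.conjTranspose_conjTranspose, mul_assoc]
  have sumCC : ∑ i, ∑ j, (C i j)ᴴ * C i j = 1 := by
    have h' : ∀ i, ∑ j, (C i j)ᴴ * C i j = (B i)ᴴ * B i := by
      intro i
      have h'' : ∀ j, (C i j)ᴴ * C i j = (B i)ᴴ * (B j * (B j)ᴴ) * B i := by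
        intro j; simp only [hC, Matrix.conjTranspose_mul, Matrix.conjTranspose_conjTranspose,
          mul_assoc]
      rw [Finset.sum_congr rfl fun j _ => h'' j]
      rw [← Finset.sum_mul, ← Finset.mul_sum, h2, mul_one]
    rw [Finset.sum_congr rfl fun i _ => h' i, h1]
  have sumCC' : ∑ i, ∑ j, C i j * (C i j)ᴴ = 1 := by
    have h' : ∀ j, ∑ i, C i j * (C i j)ᴴ = (B j)ᴴ * B j := by
      intro j
      have h'' : ∀ i, C i j * (C i j)ᴴ = (B j)ᴴ * (B i * (B i)ᴴ) * B j := by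
        intro i; simp only [hC, Matrix.conjTranspose_mul, Matrix.conjTranspose_conjTranspose,
          mul_assoc]
      rw [Finset.sum_congr rfl fun i _ => h'' i]
      rw [← Finset.sum_mul, ← Finset.mul_sum, h2, mul_one]
    rw [Finset.sum_comm, Finset.sum_congr rfl fun j _ => h' j, h1]
  have hb : ∑ i, ∑ j, ‖toEuc (X * (C i j)ᴴ)‖ ^ 2 = ‖toEuc X‖ ^ 2 := by
    have e1 : ∀ i j, ‖toEuc (X * (C i j)ᴴ)‖ ^ 2
        = ((Xᴴ * X) * ((C i j)ᴴ * C i j)).trace.re := by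
      intro i j
      rw [norm_sq_eq_re_inner, toEuc_inner]
      congr 1
      calc ((X * (C i j)ᴴ)ᴴ * (X * (C i j)ᴴ)).trace
          = ((C i j * (Xᴴ * (X * (C i j)ᴴ)))).trace := by
            simp only [Matrix.conjTranspose_mul, Matrix.conjTranspose_conjTranspose, mul_assoc]
        _ = ((Xᴴ * (X * (C i j)ᴴ)) * C i j).trace := (Matrix.trace_mul_comm _ _).symm
        _ = ((Xᴴ * X) * ((C i j)ᴴ * C i j)).trace := by simp only [mul_assoc]
    calc ∑ i, ∑ j, ‖toEuc (X * (C i j)ᴴ)‖ ^ 2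
        = ∑ i, ∑ j, ((Xᴴ * X) * ((C i j)ᴴ * C i j)).trace.re :=
          Finset.sum_congr rfl fun i _ => Finset.sum_congr rfl fun j _ => e1 i j
      _ = ((Xᴴ * X) * (∑ i, ∑ j, (C i j)ᴴ * C i j)).trace.re := by
          simp only [Finset.mul_sum, Matrix.trace_sum, Complex.re_sum]
      _ = ‖toEuc X‖ ^ 2 := by
          rw [sumCC, mul_one, norm_sq_eq_re_inner, toEuc_inner]
  have hcnorm : ∑ i, ∑ j, ‖toEuc ((C i j)ᴴ * X)‖ ^ 2 = ‖toEuc X‖ ^ 2 := by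
    have e1 : ∀ i j, ‖toEuc ((C i j)ᴴ * X)‖ ^ 2
        = ((X * Xᴴ) * (C i j * (C i j)ᴴ)).trace.re := by
      intro i j
      rw [norm_sq_eq_re_inner, toEuc_inner]
      congr 1
      calc (((C i j)ᴴ * X)ᴴ * ((C i j)ᴴ * X)).trace
          = ((Xᴴ * (C i j * ((C i j)ᴴ * X)))).trace := by
            simp only [Matrix.conjTranspose_mul, Matrix.conjTranspose_conjTranspose, mul_assoc]
        _ = ((C i j * ((C i j)ᴴ * X)) * Xᴴ).trace := (Matrix.trace_mul_comm _ _).symm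
        _ = ((C i j * (C i j)ᴴ) * (X * Xᴴ)).trace := by simp only [mul_assoc]
        _ = ((X * Xᴴ) * (C i j * (C i j)ᴴ)).trace := Matrix.trace_mul_comm _ _
    calc ∑ i, ∑ j, ‖toEuc ((C i j)ᴴ * X)‖ ^ 2
        = ∑ i, ∑ j, ((X * Xᴴ) * (C i j * (C i j)ᴴ)).trace.re :=
          Finset.sum_congr rfl fun i _ => Finset.sum_congr rfl fun j _ => e1 i j
      _ = ((X * Xᴴ) * (∑ i, ∑ j, C i j * (C i j)ᴴ)).trace.re := by
          simp only [Finset.mul_sum, Matrix.trace_sum, Complex.re_sum]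
      _ = ‖toEuc X‖ ^ 2 := by
          rw [sumCC', mul_one, norm_sq_eq_re_inner, toEuc_inner, Matrix.trace_mul_comm]
  have hmain : ‖toEuc T‖ ^ 2 ≤ ‖toEuc X‖ ^ 2 := by
    rw [norm_sq_eq_re_inner, toEuc_inner, key]
    calc (∑ i, ∑ j, ((X * (C i j)ᴴ)ᴴ * ((C i j)ᴴ * X)).trace).re
        = ∑ i, ∑ j, (⟪toEuc (X * (C i j)ᴴ), toEuc ((C i j)ᴴ * X)⟫_ℂ).re := by
          simp only [Complex.re_sum, toEuc_inner]
      _ ≤ ∑ i, ∑ j, (‖toEuc (X * (C i j)ᴴ)‖ ^ 2 + ‖toEuc ((C i j)ᴴ * X)‖ ^ 2) / 2 := by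
          refine Finset.sum_le_sum fun i _ => Finset.sum_le_sum fun j _ => ?_
          have h1' := Complex.re_le_norm (⟪toEuc (X * (C i j)ᴴ), toEuc ((C i j)ᴴ * X)⟫_ℂ)
          have h2' := norm_inner_le_norm (𝕜 := ℂ) (toEuc (X * (C i j)ᴴ)) (toEuc ((C i j)ᴴ * X))
          nlinarith [sq_nonneg (‖toEuc (X * (C i j)ᴴ)‖ - ‖toEuc ((C i j)ᴴ * X)‖)]
      _ = ‖toEuc X‖ ^ 2 := by
          have : ∑ i, ∑ j, (‖toEuc (X * (C i j)ᴴ)‖ ^ 2 + ‖toEuc ((C i j)ᴴ * X)‖ ^ 2) / 2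
              = ((∑ i, ∑ j, ‖toEuc (X * (C i j)ᴴ)‖ ^ 2)
                + ∑ i, ∑ j, ‖toEuc ((C i j)ᴴ * X)‖ ^ 2) / 2 := by
            simp only [add_div, Finset.sum_add_distrib, Finset.sum_div]
          rw [this, hb, hcnorm]
          ring
  rw [frob_eq, frob_eq]
  have := Real.sqrt_le_sqrt hmain
  rwa [Real.sqrt_sq (norm_nonneg _), Real.sqrt_sq (norm_nonneg _)] at this

end Stmt18Aux

namespace Stmt18Aux
open scoped InnerProductSpace

section chan
variable {n m l : Type*} [Fintype n] [Fintype m] [Fintype l]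

lemma tau_zero (B : l → Matrix n n ℂ) : ∑ i, B i * (0 : Matrix n n ℂ) * (B i)ᴴ = 0 := by
  simp

lemma tau_add (B : l → Matrix n n ℂ) (X Y : Matrix n n ℂ) :
    ∑ i, B i * (X + Y) * (B i)ᴴ = (∑ i, B i * X * (B i)ᴴ) + ∑ i, B i * Y * (B i)ᴴ := by
  rw [← Finset.sum_add_distrib]
  exact Finset.sum_congr rfl fun i _ => by rw [mul_add, add_mul]

lemma tau_smul (B : l → Matrix n n ℂ) (c : ℂ) (X : Matrix n n ℂ) :
    ∑ i, B i * (c • X) * (B i)ᴴ = c • ∑ i, B i * X * (B i)ᴴ := by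
  rw [Finset.smul_sum]
  exact Finset.sum_congr rfl fun i _ => by rw [Matrix.mul_smul, Matrix.smul_mul]

lemma tau_herm (B : l → Matrix n n ℂ) {X : Matrix n n ℂ} (hX : X.IsHermitian) :
    (∑ i, B i * X * (B i)ᴴ).IsHermitian := by
  unfold Matrix.IsHermitian
  rw [Matrix.conjTranspose_sum]
  exact Finset.sum_congr rfl fun i _ => by
    simp only [Matrix.conjTranspose_mul, Matrix.conjTranspose_conjTranspose, hX.eq, mul_assoc]

lemma tau_trace [DecidableEq n] (B : l → Matrix n n ℂ) (h1 : ∑ i, (B i)ᴴ * B i = 1) (X : Matrix n n ℂ) :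
    (∑ i, B i * X * (B i)ᴴ).trace = X.trace := by
  rw [Matrix.trace_sum]
  have : ∀ i, (B i * X * (B i)ᴴ).trace = ((B i)ᴴ * B i * X).trace := by
    intro i
    rw [Matrix.trace_mul_cycle, mul_assoc]
  rw [Finset.sum_congr rfl fun i _ => this i, ← Matrix.trace_sum, ← Finset.sum_mul, h1, one_mul]

lemma tau_one [DecidableEq n] (B : l → Matrix n n ℂ) (h2 : ∑ i, B i * (B i)ᴴ = 1) :
    ∑ i, B i * (1 : Matrix n n ℂ) * (B i)ᴴ = 1 := by
  simp only [mul_one]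
  exact h2

end chan

section kron
open Kronecker
variable {n m p q : Type*} [Fintype n] [Fintype m] [Fintype p] [Fintype q]

lemma kron_conjTranspose (A : Matrix n m ℂ) (B : Matrix p q ℂ) :
    (A ⊗ₖ B)ᴴ = Aᴴ ⊗ₖ Bᴴ := by
  ext ⟨i, j⟩ ⟨k, l⟩
  simp [Matrix.conjTranspose_apply, Matrix.kroneckerMap_apply, mul_comm]

lemma sum_kron_sum {l₁ l₂ : Type*} [Fintype l₁] [Fintype l₂]
    (f : l₁ → Matrix n m ℂ) (g : l₂ → Matrix p q ℂ) :
    ∑ i : l₁ × l₂, f i.1 ⊗ₖ g i.2 = (∑ i, f i) ⊗ₖ (∑ j, g j) := by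
  ext ⟨a, b⟩ ⟨c, d⟩
  simp only [Matrix.kroneckerMap_apply, Matrix.sum_apply, Fintype.sum_prod_type]
  rw [Finset.sum_mul_sum]

lemma trace_mul_ct (A : Matrix n m ℂ) : (A * Aᴴ).trace = ((frobNorm A ^ 2 : ℝ) : ℂ) := by
  rw [Matrix.trace_mul_comm, ← toEuc_inner, inner_self_eq_norm_sq_to_K, frob_eq]
  norm_cast

lemma frob_kron (A : Matrix n m ℂ) (B : Matrix p q ℂ) :
    frobNorm (A ⊗ₖ B) = frobNorm A * frobNorm B := by
  have h : (A ⊗ₖ B) * (A ⊗ₖ B)ᴴ = (A * Aᴴ) ⊗ₖ (B * Bᴴ) := by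
    rw [kron_conjTranspose, Matrix.mul_kronecker_mul]
  rw [frobNorm, h, Matrix.trace_kronecker, trace_mul_ct, trace_mul_ct, ← Complex.ofReal_mul,
    Complex.ofReal_re, Real.sqrt_mul (sq_nonneg _), Real.sqrt_sq (frob_nonneg _),
    Real.sqrt_sq (frob_nonneg _)]

lemma kron_herm {A : Matrix n n ℂ} {B : Matrix p p ℂ} (hA : A.IsHermitian)
    (hB : B.IsHermitian) : (A ⊗ₖ B).IsHermitian := by
  unfold Matrix.IsHermitian
  rw [kron_conjTranspose, hA.eq, hB.eq]

end kron

section ptr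
open Kronecker
variable {n₁ n₂ : Type*} [Fintype n₁] [Fintype n₂] [DecidableEq n₁] [DecidableEq n₂]

noncomputable def ptr2 (Y : Matrix (n₁ × n₂) (n₁ × n₂) ℂ) : Matrix n₁ n₁ ℂ :=
  Matrix.of fun a b => ∑ j, Y (a, j) (b, j)

noncomputable def blk (Y : Matrix (n₁ × n₂) (n₁ × n₂) ℂ) (a b : n₁) : Matrix n₂ n₂ ℂ :=
  Matrix.of fun k l => Y (a, k) (b, l)

lemma ptr2_kron (A : Matrix n₁ n₁ ℂ) (B : Matrix n₂ n₂ ℂ) :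
    ptr2 (A ⊗ₖ B) = B.trace • A := by
  ext a b
  simp only [ptr2, Matrix.of_apply, Matrix.kroneckerMap_apply, Matrix.smul_apply,
    Matrix.trace, Matrix.diag_apply, smul_eq_mul]
  rw [← Finset.mul_sum, mul_comm]

lemma ptr2_add (X Y : Matrix (n₁ × n₂) (n₁ × n₂) ℂ) : ptr2 (X + Y) = ptr2 X + ptr2 Y := by
  ext a b
  simp [ptr2, Finset.sum_add_distrib]

lemma ptr2_sub (X Y : Matrix (n₁ × n₂) (n₁ × n₂) ℂ) : ptr2 (X - Y) = ptr2 X - ptr2 Y := by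
  ext a b
  simp [ptr2, Finset.sum_sub_distrib]

lemma ptr2_smul (c : ℂ) (X : Matrix (n₁ × n₂) (n₁ × n₂) ℂ) : ptr2 (c • X) = c • ptr2 X := by
  ext a b
  simp [ptr2, Finset.mul_sum]

lemma ptr2_trace (Y : Matrix (n₁ × n₂) (n₁ × n₂) ℂ) : (ptr2 Y).trace = Y.trace := by
  simp only [ptr2, Matrix.trace, Matrix.diag_apply, Matrix.of_apply, Fintype.sum_prod_type]

lemma ptr2_herm {Y : Matrix (n₁ × n₂) (n₁ × n₂) ℂ} (hY : Y.IsHermitian) :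
    (ptr2 Y).IsHermitian := by
  ext a b
  simp only [Matrix.conjTranspose_apply, ptr2, Matrix.of_apply, star_sum]
  exact Finset.sum_congr rfl fun j _ => congrFun (congrFun hY (a, j)) (b, j)

lemma blk_trace (Y : Matrix (n₁ × n₂) (n₁ × n₂) ℂ) (a b : n₁) :
    (blk Y a b).trace = ptr2 Y a b := rfl

end ptr
end Stmt18Aux

namespace Stmt18Aux
open scoped InnerProductSpace
open Kronecker

section ptr2more
variable {n m n₁ n₂ : Type*} [Fintype n] [Fintype m] [Fintype n₁] [Fintype n₂]
  [DecidableEq n₁] [DecidableEq n₂]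

lemma norm_sq_sum (X : Matrix n m ℂ) : ‖toEuc X‖ ^ 2 = ∑ p : n × m, ‖X p.1 p.2‖ ^ 2 := by
  have : ‖toEuc X‖ = Real.sqrt (∑ p : n × m, ‖X p.1 p.2‖ ^ 2) := EuclideanSpace.norm_eq _
  rw [this, Real.sq_sqrt (Finset.sum_nonneg fun p _ => sq_nonneg _)]

lemma frob_sq_blocks (Y : Matrix (n₁ × n₂) (n₁ × n₂) ℂ) :
    ‖toEuc Y‖ ^ 2 = ∑ a : n₁, ∑ b : n₁, ‖toEuc (blk Y a b)‖ ^ 2 := by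
  rw [norm_sq_sum]
  have h : ∀ a b : n₁, ‖toEuc (blk Y a b)‖ ^ 2 = ∑ k : n₂, ∑ l : n₂, ‖Y (a,k) (b,l)‖ ^ 2 := by
    intro a b
    rw [norm_sq_sum, Fintype.sum_prod_type]
    rfl
  rw [Finset.sum_congr rfl fun a _ => Finset.sum_congr rfl fun b _ => h a b]
  rw [Fintype.sum_prod_type]
  have h2 : ∀ p : n₁ × n₂, ∑ q : n₁ × n₂, ‖Y p q‖ ^ 2
      = ∑ b : n₁, ∑ l : n₂, ‖Y p (b,l)‖ ^ 2 := fun p => Fintype.sum_prod_type _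
  rw [Finset.sum_congr rfl fun p _ => h2 p, Fintype.sum_prod_type]
  refine Finset.sum_congr rfl fun a _ => ?_
  rw [Finset.sum_comm]

lemma blk_one_kron (C : Matrix n₂ n₂ ℂ) (Y : Matrix (n₁ × n₂) (n₁ × n₂) ℂ) (a b : n₁) :
    blk (((1 : Matrix n₁ n₁ ℂ) ⊗ₖ C) * Y * ((1 : Matrix n₁ n₁ ℂ) ⊗ₖ C)ᴴ) a b
      = C * blk Y a b * Cᴴ := by
  rw [kron_conjTranspose, Matrix.conjTranspose_one]
  ext k l
  simp only [blk, Matrix.of_apply, Matrix.mul_apply, Matrix.kroneckerMap_apply,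
    Matrix.one_apply, Fintype.sum_prod_type, ite_mul, zero_mul, mul_ite, mul_zero,
    Finset.sum_ite_irrel, Finset.sum_const_zero,
    Finset.sum_ite_eq, Finset.sum_ite_eq', Finset.mem_univ, if_true, one_mul, mul_one]

lemma ptr2_kron_one (B : Matrix n₁ n₁ ℂ) (Y : Matrix (n₁ × n₂) (n₁ × n₂) ℂ) :
    ptr2 ((B ⊗ₖ (1 : Matrix n₂ n₂ ℂ)) * Y * (B ⊗ₖ (1 : Matrix n₂ n₂ ℂ))ᴴ)
      = B * ptr2 Y * Bᴴ := by
  rw [kron_conjTranspose, Matrix.conjTranspose_one]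
  ext a b
  simp only [ptr2, Matrix.of_apply, Matrix.mul_apply, Matrix.kroneckerMap_apply,
    Matrix.one_apply, Fintype.sum_prod_type, ite_mul, zero_mul, mul_ite, mul_zero,
    Finset.sum_ite_irrel, Finset.sum_const_zero,
    Finset.sum_ite_eq, Finset.sum_ite_eq', Finset.mem_univ, if_true,
    Matrix.conjTranspose_apply, Finset.sum_mul, Finset.mul_sum, one_mul, mul_one]
  rw [Finset.sum_comm]
  exact Finset.sum_congr rfl fun x1 _ => by rw [Finset.sum_comm]

lemma trace_kron_one_mul (A : Matrix n₁ n₁ ℂ) (Y : Matrix (n₁ × n₂) (n₁ × n₂) ℂ) :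
    ((A ⊗ₖ (1 : Matrix n₂ n₂ ℂ)) * Y).trace = (A * ptr2 Y).trace := by
  simp only [Matrix.trace, Matrix.diag_apply, Matrix.mul_apply, Matrix.kroneckerMap_apply,
    Matrix.one_apply, ptr2, Matrix.of_apply, Fintype.sum_prod_type, ite_mul, zero_mul,
    mul_ite, mul_zero, Finset.sum_ite_irrel, Finset.sum_const_zero,
    Finset.sum_ite_eq, Finset.sum_ite_eq', Finset.mem_univ, if_true,
    Finset.mul_sum, one_mul, mul_one]
  exact Finset.sum_congr rfl fun x _ => by rw [Finset.sum_comm]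

end ptr2more
end Stmt18Aux


namespace Stmt18Aux
open scoped InnerProductSpace
open Kronecker

section sets
variable {n m : Type*} [Fintype n] [Fintype m]

def Dset (τ : Matrix n n ℂ → Matrix m m ℂ) (U : Matrix n n ℂ) : Set ℝ :=
  {d : ℝ | ∃ X : Matrix n n ℂ, X.IsHermitian ∧ frobNorm X ≤ 1 ∧
      (U * X).trace.re = 0 ∧ d = frobNorm (τ X)}

lemma sigma2_def (τ : Matrix n n ℂ → Matrix m m ℂ) :
    sigma2 τ = sInf {c : ℝ | ∃ U : Matrix n n ℂ, U.IsHermitian ∧ U ≠ 0 ∧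
      c = sSup (Dset τ U)} := rfl

lemma herm_trace_re {X : Matrix n n ℂ} (hX : X.IsHermitian) :
    X.trace = ((X.trace.re : ℝ) : ℂ) := by
  have h : star X.trace = X.trace := by
    conv_lhs => rw [← Matrix.trace_conjTranspose, hX.eq]
  exact (Complex.conj_eq_iff_re.mp h).symm

lemma herm_real_smul (r : ℝ) {X : Matrix n n ℂ} (hX : X.IsHermitian) :
    (((r : ℂ)) • X).IsHermitian := by
  unfold Matrix.IsHermitian
  rw [Matrix.conjTranspose_smul, hX.eq, Complex.star_def, Complex.conj_ofReal]

lemma le_of_sq_le_sq {a b : ℝ} (hb : 0 ≤ b) (h : a ^ 2 ≤ b ^ 2) (ha : 0 ≤ a) : a ≤ b := by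
  nlinarith

section chanDefs
variable {l : Type*} [Fintype l] [DecidableEq n] (B : l → Matrix n n ℂ)

lemma zero_mem_Dset (U : Matrix n n ℂ) :
    (0 : ℝ) ∈ Dset (fun X => ∑ i, B i * X * (B i)ᴴ) U := by
  refine ⟨0, Matrix.isHermitian_zero, ?_, by simp, ?_⟩
  · rw [frob_zero]; exact zero_le_one
  · show (0:ℝ) = frobNorm (∑ i, B i * (0 : Matrix n n ℂ) * (B i)ᴴ)
    rw [tau_zero, frob_zero]

lemma Dset_subset_Icc (h1 : ∑ i, (B i)ᴴ * B i = 1) (h2 : ∑ i, B i * (B i)ᴴ = 1)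
    (U : Matrix n n ℂ) :
    Dset (fun X => ∑ i, B i * X * (B i)ᴴ) U ⊆ Set.Icc 0 1 := by
  rintro d ⟨X, hX, hXn, hXt, rfl⟩
  exact ⟨frob_nonneg _, le_trans (contraction B h1 h2 X) hXn⟩

lemma Dset_bddAbove (h1 : ∑ i, (B i)ᴴ * B i = 1) (h2 : ∑ i, B i * (B i)ᴴ = 1)
    (U : Matrix n n ℂ) : BddAbove (Dset (fun X => ∑ i, B i * X * (B i)ᴴ) U) :=
  ⟨1, fun d hd => (Dset_subset_Icc B h1 h2 U hd).2⟩

lemma sSup_Dset_nonneg (h1 : ∑ i, (B i)ᴴ * B i = 1) (h2 : ∑ i, B i * (B i)ᴴ = 1)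
    (U : Matrix n n ℂ) : 0 ≤ sSup (Dset (fun X => ∑ i, B i * X * (B i)ᴴ) U) :=
  le_csSup (Dset_bddAbove B h1 h2 U) (zero_mem_Dset B U)

lemma sSup_Dset_le_one (h1 : ∑ i, (B i)ᴴ * B i = 1) (h2 : ∑ i, B i * (B i)ᴴ = 1)
    (U : Matrix n n ℂ) : sSup (Dset (fun X => ∑ i, B i * X * (B i)ᴴ) U) ≤ 1 :=
  csSup_le ⟨0, zero_mem_Dset B U⟩ fun d hd => (Dset_subset_Icc B h1 h2 U hd).2

/-- universal bound from membership -/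
lemma le_sSup_Dset (h1 : ∑ i, (B i)ᴴ * B i = 1) (h2 : ∑ i, B i * (B i)ᴴ = 1)
    (U : Matrix n n ℂ) {X : Matrix n n ℂ} (hX : X.IsHermitian) (hXn : frobNorm X ≤ 1)
    (hXt : (U * X).trace.re = 0) :
    frobNorm (∑ i, B i * X * (B i)ᴴ) ≤ sSup (Dset (fun X => ∑ i, B i * X * (B i)ᴴ) U) :=
  le_csSup (Dset_bddAbove B h1 h2 U) ⟨X, hX, hXn, hXt, rfl⟩

/-- scaled bound for Hermitian traceless matrices -/
lemma herm_traceless_bound (h1 : ∑ i, (B i)ᴴ * B i = 1) (h2 : ∑ i, B i * (B i)ᴴ = 1)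
    {X : Matrix n n ℂ} (hX : X.IsHermitian) (hXt : X.trace = 0) :
    frobNorm (∑ i, B i * X * (B i)ᴴ)
      ≤ sSup (Dset (fun X => ∑ i, B i * X * (B i)ᴴ) 1) * frobNorm X := by
  by_cases hX0 : X = 0
  · subst hX0
    rw [tau_zero, frob_zero, mul_zero]
  · have hc : 0 < frobNorm X := frob_pos hX0
    set c : ℝ := (frobNorm X)⁻¹ with hcdef
    have hc0 : 0 < c := inv_pos.mpr hc
    have hXherm : (((c : ℂ)) • X).IsHermitian := herm_real_smul c hX
    have hXn : frobNorm (((c : ℂ)) • X) = 1 := by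
      rw [frob_smul, Complex.norm_real, Real.norm_eq_abs, abs_of_pos hc0, hcdef, inv_mul_cancel₀ (ne_of_gt hc)]
    have hXt' : ((1 : Matrix n n ℂ) * (((c : ℂ)) • X)).trace.re = 0 := by
      rw [one_mul, Matrix.trace_smul, hXt, smul_zero]
      rfl
    have hmem := le_sSup_Dset B h1 h2 1 hXherm (le_of_eq hXn) hXt'
    rw [tau_smul, frob_smul, Complex.norm_real, Real.norm_eq_abs, abs_of_pos hc0] at hmem
    calc frobNorm (∑ i, B i * X * (B i)ᴴ)
        = (c * frobNorm (∑ i, B i * X * (B i)ᴴ)) * frobNorm X := by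
          rw [mul_comm c, mul_assoc, hcdef, inv_mul_cancel₀ (ne_of_gt hc), mul_one]
      _ ≤ sSup (Dset (fun X => ∑ i, B i * X * (B i)ᴴ) 1) * frobNorm X := by
          apply mul_le_mul_of_nonneg_right hmem (le_of_lt hc)
  
end chanDefs
end sets
end Stmt18Aux

namespace Stmt18Aux
open scoped InnerProductSpace
open Kronecker

section pyth
variable {n m : Type*} [Fintype n] [Fintype m]

lemma pyth_gen {ι : Type*} [Fintype ι] (x y : EuclideanSpace ℂ ι) (a b : ℝ)
    (h : (⟪x, y⟫_ℂ).re = 0) :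
    ‖(a : ℂ) • x + (b : ℂ) • y‖ ^ 2 = a ^ 2 * ‖x‖ ^ 2 + b ^ 2 * ‖y‖ ^ 2 := by
  rw [norm_add_sq (𝕜 := ℂ)]
  rw [inner_smul_left, inner_smul_right]
  have hre : ((starRingEnd ℂ) (a : ℂ) * ((b : ℂ) * ⟪x, y⟫_ℂ)).re = a * (b * (⟪x, y⟫_ℂ).re) := by
    rw [Complex.conj_ofReal]
    simp [Complex.mul_re]
  simp only [RCLike.re_to_complex]
  rw [hre, h]
  rw [norm_smul, norm_smul, Complex.norm_real, Complex.norm_real, Real.norm_eq_abs,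
    Real.norm_eq_abs, mul_pow, mul_pow, sq_abs, sq_abs]
  ring

lemma pyth_herm {P Q : Matrix n n ℂ} (hP : P.IsHermitian) (hQ : Q.IsHermitian) :
    ‖toEuc (P + Complex.I • Q)‖ ^ 2 = ‖toEuc P‖ ^ 2 + ‖toEuc Q‖ ^ 2 := by
  have hreal : star ((Pᴴ * Q).trace) = (Pᴴ * Q).trace := by
    calc star ((Pᴴ * Q).trace) = ((Pᴴ * Q)ᴴ).trace := (Matrix.trace_conjTranspose _).symm
      _ = (Qᴴ * P).trace := by
          rw [Matrix.conjTranspose_mul, Matrix.conjTranspose_conjTranspose]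
      _ = (Q * P).trace := by rw [hQ.eq]
      _ = (P * Q).trace := Matrix.trace_mul_comm _ _
      _ = (Pᴴ * Q).trace := by rw [hP.eq]
  have him : ((Pᴴ * Q).trace).im = 0 := Complex.conj_eq_iff_im.mp hreal
  rw [toEuc_add, toEuc_smul, norm_add_sq (𝕜 := ℂ)]
  have hcross : (⟪toEuc P, Complex.I • toEuc Q⟫_ℂ).re = 0 := by
    rw [inner_smul_right, toEuc_inner]
    simp [Complex.mul_re, him]
  simp only [RCLike.re_to_complex]
  rw [hcross, norm_smul, Complex.norm_I, one_mul]
  ring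

end pyth
end Stmt18Aux

namespace Stmt18Aux
open scoped InnerProductSpace
open Kronecker

section L7
variable {n l : Type*} [Fintype n] [DecidableEq n] [Fintype l]

lemma traceless_bound_general (B : l → Matrix n n ℂ)
    (h1 : ∑ i, (B i)ᴴ * B i = 1) (h2 : ∑ i, B i * (B i)ᴴ = 1)
    {M : Matrix n n ℂ} (hMt : M.trace = 0) :
    frobNorm (∑ i, B i * M * (B i)ᴴ)
      ≤ sSup (Dset (fun X => ∑ i, B i * X * (B i)ᴴ) 1) * frobNorm M := by
  set s := sSup (Dset (fun X => ∑ i, B i * X * (B i)ᴴ) 1) with hs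
  have hs0 : 0 ≤ s := sSup_Dset_nonneg B h1 h2 1
  set r2 : ℝ := 2⁻¹ with hr2
  set H : Matrix n n ℂ := ((r2 : ℂ)) • (M + Mᴴ) with hH
  set K : Matrix n n ℂ := (Complex.I * (r2 : ℂ)) • (Mᴴ - M) with hK
  have hHh : H.IsHermitian := by
    apply herm_real_smul
    unfold Matrix.IsHermitian
    rw [Matrix.conjTranspose_add, Matrix.conjTranspose_conjTranspose, add_comm]
  have hKh : K.IsHermitian := by
    unfold Matrix.IsHermitian
    rw [hK, Matrix.conjTranspose_smul, Matrix.conjTranspose_sub,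
      Matrix.conjTranspose_conjTranspose]
    rw [show star (Complex.I * (r2 : ℂ)) = -(Complex.I * (r2 : ℂ)) by
      simp [Complex.ext_iff]]
    rw [neg_smul, ← smul_neg, neg_sub]
  have hM : M = H + Complex.I • K := by
    rw [hH, hK, smul_smul]
    rw [show Complex.I * (Complex.I * (r2 : ℂ)) = -((r2:ℝ) : ℂ) by
      rw [← mul_assoc, Complex.I_mul_I]; ring]
    rw [neg_smul, smul_add, smul_sub]
    rw [show ((r2:ℝ) : ℂ) = (2 : ℂ)⁻¹ by rw [hr2]; push_cast; ring]
    module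
  have hHt : H.trace = 0 := by
    rw [hH, Matrix.trace_smul, Matrix.trace_add, Matrix.trace_conjTranspose, hMt, star_zero,
      add_zero, smul_zero]
  have hKt : K.trace = 0 := by
    rw [hK, Matrix.trace_smul, Matrix.trace_sub, Matrix.trace_conjTranspose, hMt, star_zero,
      zero_sub, neg_zero, smul_zero]
  have hτH := herm_traceless_bound B h1 h2 hHh hHt
  have hτK := herm_traceless_bound B h1 h2 hKh hKt
  have hdecM : frobNorm M ^ 2 = frobNorm H ^ 2 + frobNorm K ^ 2 := by
    rw [frob_eq, frob_eq, frob_eq, hM]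
    exact pyth_herm hHh hKh
  have hdecτ : frobNorm (∑ i, B i * M * (B i)ᴴ) ^ 2
      = frobNorm (∑ i, B i * H * (B i)ᴴ) ^ 2 + frobNorm (∑ i, B i * K * (B i)ᴴ) ^ 2 := by
    have : ∑ i, B i * M * (B i)ᴴ
        = (∑ i, B i * H * (B i)ᴴ) + Complex.I • ∑ i, B i * K * (B i)ᴴ := by
      conv_lhs => rw [hM]
      rw [tau_add B H (Complex.I • K), tau_smul B Complex.I K]
    rw [this, frob_eq, frob_eq, frob_eq]
    exact pyth_herm (tau_herm B hHh) (tau_herm B hKh)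
  refine le_of_sq_le_sq (mul_nonneg hs0 (frob_nonneg _)) ?_ (frob_nonneg _)
  rw [hdecτ, mul_pow, hdecM]
  nlinarith [frob_nonneg (∑ i, B i * H * (B i)ᴴ), frob_nonneg (∑ i, B i * K * (B i)ᴴ),
    frob_nonneg H, frob_nonneg K, mul_le_mul hτH hτH (frob_nonneg _) (mul_nonneg hs0 (frob_nonneg _)),
    mul_le_mul hτK hτK (frob_nonneg _) (mul_nonneg hs0 (frob_nonneg _))]

end L7
end Stmt18Aux

namespace Stmt18Aux
open scoped InnerProductSpace
open Kronecker

section P1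
variable {n l : Type*} [Fintype n] [DecidableEq n] [Nonempty n] [Fintype l]

lemma one_matrix_ne_zero : (1 : Matrix n n ℂ) ≠ 0 := by
  intro h
  have := congrFun (congrFun h (Classical.arbitrary n)) (Classical.arbitrary n)
  simp [Matrix.one_apply] at this

lemma sigma2_eq_sSup (B : l → Matrix n n ℂ)
    (h1 : ∑ i, (B i)ᴴ * B i = 1) (h2 : ∑ i, B i * (B i)ᴴ = 1) :
    sigma2 (fun X => ∑ i, B i * X * (B i)ᴴ)
      = sSup (Dset (fun X => ∑ i, B i * X * (B i)ᴴ) 1) := by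
  set τ : Matrix n n ℂ → Matrix n n ℂ := fun X => ∑ i, B i * X * (B i)ᴴ with hτ
  set s := sSup (Dset τ 1) with hs
  have hmem : s ∈ {c : ℝ | ∃ U : Matrix n n ℂ, U.IsHermitian ∧ U ≠ 0 ∧ c = sSup (Dset τ U)} :=
    ⟨1, Matrix.isHermitian_one, one_matrix_ne_zero, rfl⟩
  have hbdd : BddBelow {c : ℝ | ∃ U : Matrix n n ℂ, U.IsHermitian ∧ U ≠ 0 ∧
      c = sSup (Dset τ U)} := by
    refine ⟨0, ?_⟩
    rintro c ⟨U, hU, hU0, rfl⟩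
    exact sSup_Dset_nonneg B h1 h2 U
  rw [sigma2_def]
  apply le_antisymm (csInf_le hbdd hmem)
  apply le_csInf ⟨s, hmem⟩
  rintro c ⟨U, hU, hU0, rfl⟩
  rw [hs]
  apply csSup_le ⟨0, zero_mem_Dset B 1⟩
  rintro d ⟨X, hX, hXn, hXt, rfl⟩
  -- now show frobNorm (τ X) ≤ sSup (Dset τ U)
  rw [one_mul] at hXt
  have hXtr : X.trace = 0 := by rw [herm_trace_re hX, hXt, Complex.ofReal_zero]
  by_cases hβ : (U * X).trace.re = 0
  · exact le_sSup_Dset B h1 h2 U hX hXn hβ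
  -- construction of Z
  set β : ℝ := (U * X).trace.re with hβdef
  set α : ℝ := U.trace.re with hαdef
  set Z₀ : Matrix n n ℂ := ((-β : ℝ) : ℂ) • (1 : Matrix n n ℂ) + ((α : ℝ) : ℂ) • X with hZ₀
  have hZ₀herm : Z₀.IsHermitian :=
    Matrix.IsHermitian.add (herm_real_smul _ Matrix.isHermitian_one) (herm_real_smul _ hX)
  have hZ₀tr : Z₀.trace = ((-β : ℝ) : ℂ) * (Fintype.card n : ℂ) := by
    rw [hZ₀, Matrix.trace_add, Matrix.trace_smul, Matrix.trace_smul, Matrix.trace_one, hXtr,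
      smul_zero, add_zero, smul_eq_mul]
  have hZ₀ne : Z₀ ≠ 0 := by
    intro h
    rw [h, Matrix.trace_zero] at hZ₀tr
    have hcard : (Fintype.card n : ℂ) ≠ 0 := by
      simp [Fintype.card_ne_zero]
    have hb0 : ((-β : ℝ) : ℂ) = 0 := by
      rcases mul_eq_zero.mp hZ₀tr.symm with h' | h'
      · exact h'
      · exact absurd h' hcard
    rw [Complex.ofReal_eq_zero, neg_eq_zero] at hb0
    exact hβ hb0
  have hc0 : 0 < frobNorm Z₀ := frob_pos hZ₀ne
  set c0 : ℝ := frobNorm Z₀ with hc0def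
  set Z : Matrix n n ℂ := ((c0⁻¹ : ℝ) : ℂ) • Z₀ with hZ
  have hZherm : Z.IsHermitian := herm_real_smul _ hZ₀herm
  have hZn : frobNorm Z = 1 := by
    rw [hZ, frob_smul, Complex.norm_real, Real.norm_eq_abs, abs_of_pos (inv_pos.mpr hc0),
      inv_mul_cancel₀ (ne_of_gt hc0)]
  have hUZ₀ : (U * Z₀).trace.re = 0 := by
    rw [hZ₀, mul_add, Matrix.mul_smul, Matrix.mul_smul, mul_one, Matrix.trace_add,
      Matrix.trace_smul, Matrix.trace_smul]
    have e1 : ∀ (r : ℝ) (z : ℂ), (((r : ℂ)) • z).re = r * z.re := by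
      intro r z
      simp [Complex.mul_re]
    rw [Complex.add_re, e1, e1, ← hβdef, ← hαdef]
    ring
  have hUZ : (U * Z).trace.re = 0 := by
    rw [hZ, Matrix.mul_smul, Matrix.trace_smul]
    have : (((c0⁻¹ : ℝ) : ℂ) • (U * Z₀).trace).re = c0⁻¹ * (U * Z₀).trace.re := by
      simp [Complex.mul_re]
    rw [this, hUZ₀, mul_zero]
  -- norm computations
  have hcross1 : (⟪toEuc (1 : Matrix n n ℂ), toEuc X⟫_ℂ).re = 0 := by
    rw [toEuc_inner, Matrix.conjTranspose_one, one_mul, hXtr]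
    rfl
  have hcross2 : (⟪toEuc (1 : Matrix n n ℂ), toEuc (τ X)⟫_ℂ).re = 0 := by
    rw [toEuc_inner, Matrix.conjTranspose_one, one_mul, hτ, tau_trace B h1, hXtr]
    rfl
  have hτZ₀ : τ Z₀ = ((-β : ℝ) : ℂ) • (1 : Matrix n n ℂ) + ((α : ℝ) : ℂ) • τ X := by
    simp only [hτ, hZ₀]
    rw [tau_add B _ _, tau_smul B _ (1 : Matrix n n ℂ), tau_smul B _ X, tau_one B h2]
  set N : ℝ := ‖toEuc (1 : Matrix n n ℂ)‖ ^ 2 with hN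
  have hnZ₀ : frobNorm Z₀ ^ 2 = β ^ 2 * N + α ^ 2 * frobNorm X ^ 2 := by
    rw [frob_eq, hZ₀, toEuc_add, toEuc_smul, toEuc_smul, pyth_gen _ _ _ _ hcross1, frob_eq]
    rw [neg_pow, hN]
    ring
  have hnτZ₀ : frobNorm (τ Z₀) ^ 2 = β ^ 2 * N + α ^ 2 * frobNorm (τ X) ^ 2 := by
    rw [frob_eq, hτZ₀, toEuc_add, toEuc_smul, toEuc_smul, pyth_gen _ _ _ _ hcross2, frob_eq]
    rw [neg_pow, hN]
    ring
  -- key inequality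
  have hd1 : frobNorm (τ X) ≤ 1 := le_trans (contraction B h1 h2 X) hXn
  have hd0 : 0 ≤ frobNorm (τ X) := frob_nonneg _
  have hN0 : 0 ≤ N := by rw [hN]; positivity
  have hkey : frobNorm (τ X) * c0 ≤ frobNorm (τ Z₀) := by
    refine le_of_sq_le_sq (frob_nonneg _) ?_ (mul_nonneg hd0 (le_of_lt hc0))
    rw [mul_pow, hc0def, hnZ₀, hnτZ₀]
    have ht2 : frobNorm (τ X) ^ 2 ≤ 1 := by nlinarith
    have hx2 : frobNorm X ^ 2 ≤ 1 := by nlinarith [frob_nonneg X]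
    nlinarith [mul_nonneg (mul_nonneg (sq_nonneg β) hN0) (sub_nonneg.mpr ht2),
      mul_nonneg (mul_nonneg (sq_nonneg α) (sq_nonneg (frobNorm (τ X)))) (sub_nonneg.mpr hx2)]
  have hτZval : frobNorm (τ Z) = c0⁻¹ * frobNorm (τ Z₀) := by
    have hsm : τ Z = ((c0⁻¹ : ℝ) : ℂ) • τ Z₀ := by
      rw [hZ]
      exact tau_smul B _ Z₀
    rw [hsm, frob_smul, Complex.norm_real, Real.norm_eq_abs, abs_of_pos (inv_pos.mpr hc0)]
  have hdZ : frobNorm (τ X) ≤ frobNorm (τ Z) := by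
    rw [hτZval]
    calc frobNorm (τ X) = (frobNorm (τ X) * c0) * c0⁻¹ := by
          field_simp
      _ ≤ frobNorm (τ Z₀) * c0⁻¹ :=
          mul_le_mul_of_nonneg_right hkey (inv_nonneg.mpr (le_of_lt hc0))
      _ = c0⁻¹ * frobNorm (τ Z₀) := mul_comm _ _
  exact le_trans hdZ (le_sSup_Dset B h1 h2 U hZherm (le_of_eq hZn) hUZ)

end P1
end Stmt18Aux

namespace Stmt18Aux
open scoped InnerProductSpace
open Kronecker

section tensor
variable {n₁ n₂ l₁ l₂ : Type*} [Fintype n₁] [Fintype n₂] [DecidableEq n₁] [DecidableEq n₂]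
  [Fintype l₁] [Fintype l₂]

lemma ptr2_sum {ι : Type*} (s : Finset ι) (f : ι → Matrix (n₁ × n₂) (n₁ × n₂) ℂ) :
    ptr2 (∑ i ∈ s, f i) = ∑ i ∈ s, ptr2 (f i) := by
  ext a b
  simp only [ptr2, Matrix.of_apply, Matrix.sum_apply]
  rw [Finset.sum_comm]

lemma blk_sum {ι : Type*} (s : Finset ι) (f : ι → Matrix (n₁ × n₂) (n₁ × n₂) ℂ) (a b : n₁) :
    blk (∑ i ∈ s, f i) a b = ∑ i ∈ s, blk (f i) a b := by
  ext k l
  simp only [blk, Matrix.of_apply, Matrix.sum_apply]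

variable (A₁ : l₁ → Matrix n₁ n₁ ℂ) (A₂ : l₂ → Matrix n₂ n₂ ℂ)

lemma tensor_kron (M : Matrix n₁ n₁ ℂ) (N : Matrix n₂ n₂ ℂ) :
    ∑ i : l₁ × l₂, (A₁ i.1 ⊗ₖ A₂ i.2) * (M ⊗ₖ N) * (A₁ i.1 ⊗ₖ A₂ i.2)ᴴ
      = (∑ i, A₁ i * M * (A₁ i)ᴴ) ⊗ₖ (∑ j, A₂ j * N * (A₂ j)ᴴ) := by
  have hterm : ∀ p : l₁ × l₂, (A₁ p.1 ⊗ₖ A₂ p.2) * (M ⊗ₖ N) * (A₁ p.1 ⊗ₖ A₂ p.2)ᴴ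
      = (A₁ p.1 * M * (A₁ p.1)ᴴ) ⊗ₖ (A₂ p.2 * N * (A₂ p.2)ᴴ) := by
    intro p
    rw [kron_conjTranspose, ← Matrix.mul_kronecker_mul, ← Matrix.mul_kronecker_mul]
  calc ∑ i : l₁ × l₂, (A₁ i.1 ⊗ₖ A₂ i.2) * (M ⊗ₖ N) * (A₁ i.1 ⊗ₖ A₂ i.2)ᴴ
      = ∑ i : l₁ × l₂, (A₁ i.1 * M * (A₁ i.1)ᴴ) ⊗ₖ (A₂ i.2 * N * (A₂ i.2)ᴴ) :=
        Finset.sum_congr rfl fun p _ => hterm p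
    _ = _ := sum_kron_sum (fun i => A₁ i * M * (A₁ i)ᴴ) (fun j => A₂ j * N * (A₂ j)ᴴ)

lemma tensor_factor (X : Matrix (n₁ × n₂) (n₁ × n₂) ℂ) :
    ∑ i : l₁ × l₂, (A₁ i.1 ⊗ₖ A₂ i.2) * X * (A₁ i.1 ⊗ₖ A₂ i.2)ᴴ
      = ∑ i : l₁, (A₁ i ⊗ₖ (1 : Matrix n₂ n₂ ℂ)) *
          (∑ j : l₂, ((1 : Matrix n₁ n₁ ℂ) ⊗ₖ A₂ j) * X * ((1 : Matrix n₁ n₁ ℂ) ⊗ₖ A₂ j)ᴴ) *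
          (A₁ i ⊗ₖ (1 : Matrix n₂ n₂ ℂ))ᴴ := by
  rw [Fintype.sum_prod_type]
  refine Finset.sum_congr rfl fun i _ => ?_
  rw [Finset.mul_sum, Finset.sum_mul]
  refine Finset.sum_congr rfl fun j _ => ?_
  have hfac : (A₁ i ⊗ₖ (1 : Matrix n₂ n₂ ℂ)) * ((1 : Matrix n₁ n₁ ℂ) ⊗ₖ A₂ j)
      = A₁ i ⊗ₖ A₂ j := by
    rw [← Matrix.mul_kronecker_mul, mul_one, one_mul]
  rw [← hfac, Matrix.conjTranspose_mul]
  simp only [mul_assoc]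

lemma ptr2_tensor (hA₂ : ∑ j, (A₂ j)ᴴ * A₂ j = 1) (X : Matrix (n₁ × n₂) (n₁ × n₂) ℂ) :
    ptr2 (∑ i : l₁ × l₂, (A₁ i.1 ⊗ₖ A₂ i.2) * X * (A₁ i.1 ⊗ₖ A₂ i.2)ᴴ)
      = ∑ i, A₁ i * ptr2 X * (A₁ i)ᴴ := by
  rw [tensor_factor, ptr2_sum]
  have hW : ptr2 (∑ j : l₂, ((1 : Matrix n₁ n₁ ℂ) ⊗ₖ A₂ j) * X *
      ((1 : Matrix n₁ n₁ ℂ) ⊗ₖ A₂ j)ᴴ) = ptr2 X := by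
    ext a b
    rw [← blk_trace, ← blk_trace, blk_sum]
    rw [Finset.sum_congr rfl fun j _ => blk_one_kron (A₂ j) X a b]
    exact tau_trace A₂ hA₂ (blk X a b)
  rw [Finset.sum_congr rfl fun i _ =>
    ptr2_kron_one (A₁ i) (∑ j : l₂, ((1 : Matrix n₁ n₁ ℂ) ⊗ₖ A₂ j) * X *
      ((1 : Matrix n₁ n₁ ℂ) ⊗ₖ A₂ j)ᴴ), hW]

lemma sigma2_block_bound (hA₂ : ∑ j, (A₂ j)ᴴ * A₂ j = 1) (hA₂' : ∑ j, A₂ j * (A₂ j)ᴴ = 1)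
    {Q : Matrix (n₁ × n₂) (n₁ × n₂) ℂ} (hQ : ptr2 Q = 0) :
    frobNorm (∑ j : l₂, ((1 : Matrix n₁ n₁ ℂ) ⊗ₖ A₂ j) * Q * ((1 : Matrix n₁ n₁ ℂ) ⊗ₖ A₂ j)ᴴ)
      ≤ sSup (Dset (fun X => ∑ j, A₂ j * X * (A₂ j)ᴴ) 1) * frobNorm Q := by
  set s₂ := sSup (Dset (fun X => ∑ j, A₂ j * X * (A₂ j)ᴴ) 1) with hs₂
  have hs0 : 0 ≤ s₂ := sSup_Dset_nonneg A₂ hA₂ hA₂' 1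
  set σQ := ∑ j : l₂, ((1 : Matrix n₁ n₁ ℂ) ⊗ₖ A₂ j) * Q * ((1 : Matrix n₁ n₁ ℂ) ⊗ₖ A₂ j)ᴴ
    with hσQ
  have hblk : ∀ a b : n₁, blk σQ a b = ∑ j, A₂ j * blk Q a b * (A₂ j)ᴴ := by
    intro a b
    rw [hσQ, blk_sum]
    exact Finset.sum_congr rfl fun j _ => blk_one_kron (A₂ j) Q a b
  have hsq : frobNorm σQ ^ 2 ≤ s₂ ^ 2 * frobNorm Q ^ 2 := by
    rw [frob_eq, frob_sq_blocks, frob_eq (X := Q), frob_sq_blocks]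
    rw [Finset.mul_sum]
    refine Finset.sum_le_sum fun a _ => ?_
    rw [Finset.mul_sum]
    refine Finset.sum_le_sum fun b _ => ?_
    rw [hblk a b]
    have htr : (blk Q a b).trace = 0 := by
      rw [blk_trace, hQ]
      rfl
    have hbound := traceless_bound_general A₂ hA₂ hA₂' htr
    rw [← frob_eq, ← frob_eq]
    calc frobNorm (∑ j, A₂ j * blk Q a b * (A₂ j)ᴴ) ^ 2
        ≤ (s₂ * frobNorm (blk Q a b)) ^ 2 := by
          have h0 : 0 ≤ frobNorm (∑ j, A₂ j * blk Q a b * (A₂ j)ᴴ) := frob_nonneg _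
          nlinarith
      _ = s₂ ^ 2 * frobNorm (blk Q a b) ^ 2 := by ring
  refine le_of_sq_le_sq (mul_nonneg hs0 (frob_nonneg _)) ?_ (frob_nonneg _)
  rw [mul_pow]
  exact hsq

end tensor
end Stmt18Aux

namespace Stmt18Aux
open scoped InnerProductSpace
open Kronecker

lemma pyth_orth {ι : Type*} [Fintype ι] {x y : EuclideanSpace ℂ ι} (h : (⟪x, y⟫_ℂ).re = 0) :
    ‖x + y‖ ^ 2 = ‖x‖ ^ 2 + ‖y‖ ^ 2 := by
  rw [norm_add_sq (𝕜 := ℂ)]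
  simp only [RCLike.re_to_complex]
  rw [h]
  ring

section P23
variable {n₁ n₂ l₁ l₂ : Type*} [Fintype n₁] [Fintype n₂] [DecidableEq n₁] [DecidableEq n₂]
  [Fintype l₁] [Fintype l₂]

lemma sum_kron_const {ι : Type*} [Fintype ι] (f : ι → Matrix n₁ n₁ ℂ) (C : Matrix n₂ n₂ ℂ) :
    ∑ i, f i ⊗ₖ C = (∑ i, f i) ⊗ₖ C := by
  ext ⟨a, k⟩ ⟨b, l⟩
  simp [Matrix.sum_apply, Matrix.kroneckerMap_apply, Finset.sum_mul]

lemma sum_const_kron {ι : Type*} [Fintype ι] (f : ι → Matrix n₂ n₂ ℂ) (C : Matrix n₁ n₁ ℂ) :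
    ∑ i, C ⊗ₖ f i = C ⊗ₖ (∑ i, f i) := by
  ext ⟨a, k⟩ ⟨b, l⟩
  simp [Matrix.sum_apply, Matrix.kroneckerMap_apply, Finset.mul_sum]

variable (A₁ : l₁ → Matrix n₁ n₁ ℂ) (A₂ : l₂ → Matrix n₂ n₂ ℂ)

lemma kraus_tensor_left (hA₁ : ∑ i, (A₁ i)ᴴ * A₁ i = 1) (hA₂ : ∑ i, (A₂ i)ᴴ * A₂ i = 1) :
    ∑ i : l₁ × l₂, (A₁ i.1 ⊗ₖ A₂ i.2)ᴴ * (A₁ i.1 ⊗ₖ A₂ i.2) = 1 := by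
  calc ∑ i : l₁ × l₂, (A₁ i.1 ⊗ₖ A₂ i.2)ᴴ * (A₁ i.1 ⊗ₖ A₂ i.2)
      = ∑ i : l₁ × l₂, ((A₁ i.1)ᴴ * A₁ i.1) ⊗ₖ ((A₂ i.2)ᴴ * A₂ i.2) :=
        Finset.sum_congr rfl fun p _ => by
          rw [kron_conjTranspose, ← Matrix.mul_kronecker_mul]
    _ = (∑ i, (A₁ i)ᴴ * A₁ i) ⊗ₖ (∑ j, (A₂ j)ᴴ * A₂ j) :=
        sum_kron_sum (fun i => (A₁ i)ᴴ * A₁ i) (fun j => (A₂ j)ᴴ * A₂ j)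
    _ = 1 := by rw [hA₁, hA₂, Matrix.one_kronecker_one]

lemma kraus_tensor_right (hA₁' : ∑ i, A₁ i * (A₁ i)ᴴ = 1) (hA₂' : ∑ i, A₂ i * (A₂ i)ᴴ = 1) :
    ∑ i : l₁ × l₂, (A₁ i.1 ⊗ₖ A₂ i.2) * (A₁ i.1 ⊗ₖ A₂ i.2)ᴴ = 1 := by
  calc ∑ i : l₁ × l₂, (A₁ i.1 ⊗ₖ A₂ i.2) * (A₁ i.1 ⊗ₖ A₂ i.2)ᴴ
      = ∑ i : l₁ × l₂, (A₁ i.1 * (A₁ i.1)ᴴ) ⊗ₖ (A₂ i.2 * (A₂ i.2)ᴴ) :=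
        Finset.sum_congr rfl fun p _ => by
          rw [kron_conjTranspose, ← Matrix.mul_kronecker_mul]
    _ = (∑ i, A₁ i * (A₁ i)ᴴ) ⊗ₖ (∑ j, A₂ j * (A₂ j)ᴴ) :=
        sum_kron_sum (fun i => A₁ i * (A₁ i)ᴴ) (fun j => A₂ j * (A₂ j)ᴴ)
    _ = 1 := by rw [hA₁', hA₂', Matrix.one_kronecker_one]

lemma kraus_sigma1_left (hA₁ : ∑ i, (A₁ i)ᴴ * A₁ i = 1) :
    ∑ i : l₁, (A₁ i ⊗ₖ (1 : Matrix n₂ n₂ ℂ))ᴴ * (A₁ i ⊗ₖ (1 : Matrix n₂ n₂ ℂ)) = 1 := by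
  calc ∑ i : l₁, (A₁ i ⊗ₖ (1 : Matrix n₂ n₂ ℂ))ᴴ * (A₁ i ⊗ₖ (1 : Matrix n₂ n₂ ℂ))
      = ∑ i : l₁, ((A₁ i)ᴴ * A₁ i) ⊗ₖ (1 : Matrix n₂ n₂ ℂ) :=
        Finset.sum_congr rfl fun i _ => by
          rw [kron_conjTranspose, Matrix.conjTranspose_one, ← Matrix.mul_kronecker_mul, one_mul]
    _ = (∑ i, (A₁ i)ᴴ * A₁ i) ⊗ₖ (1 : Matrix n₂ n₂ ℂ) := sum_kron_const _ _
    _ = 1 := by rw [hA₁, Matrix.one_kronecker_one]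

lemma kraus_sigma1_right (hA₁' : ∑ i, A₁ i * (A₁ i)ᴴ = 1) :
    ∑ i : l₁, (A₁ i ⊗ₖ (1 : Matrix n₂ n₂ ℂ)) * (A₁ i ⊗ₖ (1 : Matrix n₂ n₂ ℂ))ᴴ = 1 := by
  calc ∑ i : l₁, (A₁ i ⊗ₖ (1 : Matrix n₂ n₂ ℂ)) * (A₁ i ⊗ₖ (1 : Matrix n₂ n₂ ℂ))ᴴ
      = ∑ i : l₁, (A₁ i * (A₁ i)ᴴ) ⊗ₖ (1 : Matrix n₂ n₂ ℂ) :=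
        Finset.sum_congr rfl fun i _ => by
          rw [kron_conjTranspose, Matrix.conjTranspose_one, ← Matrix.mul_kronecker_mul, one_mul]
    _ = (∑ i, A₁ i * (A₁ i)ᴴ) ⊗ₖ (1 : Matrix n₂ n₂ ℂ) := sum_kron_const _ _
    _ = 1 := by rw [hA₁', Matrix.one_kronecker_one]

lemma inner_smul_kron_one (r : ℝ) (A : Matrix n₁ n₁ ℂ) (W : Matrix (n₁ × n₂) (n₁ × n₂) ℂ)
    (h : ptr2 W = 0) :
    ⟪toEuc (((r : ℝ) : ℂ) • (A ⊗ₖ (1 : Matrix n₂ n₂ ℂ))), toEuc W⟫_ℂ = 0 := by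
  rw [toEuc_inner, Matrix.conjTranspose_smul, Complex.star_def, Complex.conj_ofReal,
    kron_conjTranspose, Matrix.conjTranspose_one, Matrix.smul_mul, Matrix.trace_smul,
    trace_kron_one_mul, h, Matrix.mul_zero, Matrix.trace_zero, smul_zero]

end P23
end Stmt18Aux

namespace Stmt18Aux
open scoped InnerProductSpace
open Kronecker

section P2
variable {n₁ n₂ l₁ l₂ : Type*} [Fintype n₁] [Fintype n₂] [DecidableEq n₁] [DecidableEq n₂]
  [Fintype l₁] [Fintype l₂]
  (A₁ : l₁ → Matrix n₁ n₁ ℂ) (A₂ : l₂ → Matrix n₂ n₂ ℂ)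

lemma scale_kron_one_frob [Nonempty n₂] (M : Matrix n₁ n₁ ℂ) :
    frobNorm ((((frobNorm (1 : Matrix n₂ n₂ ℂ))⁻¹ : ℝ) : ℂ) • (M ⊗ₖ (1 : Matrix n₂ n₂ ℂ)))
      = frobNorm M := by
  have hf1 : 0 < frobNorm (1 : Matrix n₂ n₂ ℂ) := frob_pos one_matrix_ne_zero
  rw [frob_smul, frob_kron, Complex.norm_real, Real.norm_eq_abs,
    abs_of_pos (inv_pos.mpr hf1), mul_comm (frobNorm M), ← mul_assoc,
    inv_mul_cancel₀ (ne_of_gt hf1), one_mul]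

lemma scale_one_kron_frob [Nonempty n₁] (M : Matrix n₂ n₂ ℂ) :
    frobNorm ((((frobNorm (1 : Matrix n₁ n₁ ℂ))⁻¹ : ℝ) : ℂ) • ((1 : Matrix n₁ n₁ ℂ) ⊗ₖ M))
      = frobNorm M := by
  have hf1 : 0 < frobNorm (1 : Matrix n₁ n₁ ℂ) := frob_pos one_matrix_ne_zero
  rw [frob_smul, frob_kron, Complex.norm_real, Real.norm_eq_abs,
    abs_of_pos (inv_pos.mpr hf1), ← mul_assoc, inv_mul_cancel₀ (ne_of_gt hf1), one_mul]

lemma s1_le_st [Nonempty n₂]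
    (hA₁ : ∑ i, (A₁ i)ᴴ * A₁ i = 1) (hA₁' : ∑ i, A₁ i * (A₁ i)ᴴ = 1)
    (hA₂ : ∑ i, (A₂ i)ᴴ * A₂ i = 1) (hA₂' : ∑ i, A₂ i * (A₂ i)ᴴ = 1) :
    sSup (Dset (fun X => ∑ i, A₁ i * X * (A₁ i)ᴴ) 1)
      ≤ sSup (Dset (fun X : Matrix (n₁ × n₂) (n₁ × n₂) ℂ =>
          ∑ i : l₁ × l₂, (A₁ i.1 ⊗ₖ A₂ i.2) * X * (A₁ i.1 ⊗ₖ A₂ i.2)ᴴ) 1) := by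
  apply csSup_le ⟨0, zero_mem_Dset A₁ 1⟩
  rintro d ⟨X₁, hX, hXn, hXt, rfl⟩
  set c : ℝ := (frobNorm (1 : Matrix n₂ n₂ ℂ))⁻¹ with hc
  set X : Matrix (n₁ × n₂) (n₁ × n₂) ℂ := ((c : ℝ) : ℂ) • (X₁ ⊗ₖ (1 : Matrix n₂ n₂ ℂ)) with hX'
  have hXh : X.IsHermitian := herm_real_smul _ (kron_herm hX Matrix.isHermitian_one)
  have hXfn : frobNorm X = frobNorm X₁ := scale_kron_one_frob X₁
  rw [one_mul] at hXt
  have hX₁tr : X₁.trace = 0 := by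
    rw [herm_trace_re hX, hXt, Complex.ofReal_zero]
  have hXtr : ((1 : Matrix (n₁ × n₂) (n₁ × n₂) ℂ) * X).trace.re = 0 := by
    rw [one_mul, hX', Matrix.trace_smul, Matrix.trace_kronecker, hX₁tr, zero_mul, smul_zero]
    rfl
  have hτX : ∑ i : l₁ × l₂, (A₁ i.1 ⊗ₖ A₂ i.2) * X * (A₁ i.1 ⊗ₖ A₂ i.2)ᴴ
      = ((c : ℝ) : ℂ) • ((∑ i, A₁ i * X₁ * (A₁ i)ᴴ) ⊗ₖ (1 : Matrix n₂ n₂ ℂ)) := by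
    calc ∑ i : l₁ × l₂, (A₁ i.1 ⊗ₖ A₂ i.2) * X * (A₁ i.1 ⊗ₖ A₂ i.2)ᴴ
        = ((c : ℝ) : ℂ) • ∑ i : l₁ × l₂,
            (A₁ i.1 ⊗ₖ A₂ i.2) * (X₁ ⊗ₖ (1 : Matrix n₂ n₂ ℂ)) * (A₁ i.1 ⊗ₖ A₂ i.2)ᴴ := by
          rw [hX']
          exact tau_smul (fun i : l₁ × l₂ => A₁ i.1 ⊗ₖ A₂ i.2) _ _
      _ = ((c : ℝ) : ℂ) • ((∑ i, A₁ i * X₁ * (A₁ i)ᴴ) ⊗ₖ (∑ j, A₂ j * 1 * (A₂ j)ᴴ)) := by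
          rw [tensor_kron]
      _ = ((c : ℝ) : ℂ) • ((∑ i, A₁ i * X₁ * (A₁ i)ᴴ) ⊗ₖ (1 : Matrix n₂ n₂ ℂ)) := by
          rw [tau_one A₂ hA₂']
  have hval : frobNorm (∑ i : l₁ × l₂, (A₁ i.1 ⊗ₖ A₂ i.2) * X * (A₁ i.1 ⊗ₖ A₂ i.2)ᴴ)
      = frobNorm (∑ i, A₁ i * X₁ * (A₁ i)ᴴ) := by
    rw [hτX]
    exact scale_kron_one_frob _
  rw [← hval]
  exact le_csSup
    (Dset_bddAbove (fun i : l₁ × l₂ => A₁ i.1 ⊗ₖ A₂ i.2)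
      (kraus_tensor_left A₁ A₂ hA₁ hA₂) (kraus_tensor_right A₁ A₂ hA₁' hA₂') 1)
    ⟨X, hXh, le_of_eq_of_le hXfn hXn, hXtr, rfl⟩

lemma s2_le_st [Nonempty n₁]
    (hA₁ : ∑ i, (A₁ i)ᴴ * A₁ i = 1) (hA₁' : ∑ i, A₁ i * (A₁ i)ᴴ = 1)
    (hA₂ : ∑ i, (A₂ i)ᴴ * A₂ i = 1) (hA₂' : ∑ i, A₂ i * (A₂ i)ᴴ = 1) :
    sSup (Dset (fun X => ∑ i, A₂ i * X * (A₂ i)ᴴ) 1)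
      ≤ sSup (Dset (fun X : Matrix (n₁ × n₂) (n₁ × n₂) ℂ =>
          ∑ i : l₁ × l₂, (A₁ i.1 ⊗ₖ A₂ i.2) * X * (A₁ i.1 ⊗ₖ A₂ i.2)ᴴ) 1) := by
  apply csSup_le ⟨0, zero_mem_Dset A₂ 1⟩
  rintro d ⟨X₂, hX, hXn, hXt, rfl⟩
  set c : ℝ := (frobNorm (1 : Matrix n₁ n₁ ℂ))⁻¹ with hc
  set X : Matrix (n₁ × n₂) (n₁ × n₂) ℂ := ((c : ℝ) : ℂ) • ((1 : Matrix n₁ n₁ ℂ) ⊗ₖ X₂) with hX'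
  have hXh : X.IsHermitian := herm_real_smul _ (kron_herm Matrix.isHermitian_one hX)
  have hXfn : frobNorm X = frobNorm X₂ := scale_one_kron_frob X₂
  rw [one_mul] at hXt
  have hX₂tr : X₂.trace = 0 := by
    rw [herm_trace_re hX, hXt, Complex.ofReal_zero]
  have hXtr : ((1 : Matrix (n₁ × n₂) (n₁ × n₂) ℂ) * X).trace.re = 0 := by
    rw [one_mul, hX', Matrix.trace_smul, Matrix.trace_kronecker, hX₂tr, mul_zero, smul_zero]
    rfl
  have hτX : ∑ i : l₁ × l₂, (A₁ i.1 ⊗ₖ A₂ i.2) * X * (A₁ i.1 ⊗ₖ A₂ i.2)ᴴ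
      = ((c : ℝ) : ℂ) • ((1 : Matrix n₁ n₁ ℂ) ⊗ₖ (∑ j, A₂ j * X₂ * (A₂ j)ᴴ)) := by
    calc ∑ i : l₁ × l₂, (A₁ i.1 ⊗ₖ A₂ i.2) * X * (A₁ i.1 ⊗ₖ A₂ i.2)ᴴ
        = ((c : ℝ) : ℂ) • ∑ i : l₁ × l₂,
            (A₁ i.1 ⊗ₖ A₂ i.2) * ((1 : Matrix n₁ n₁ ℂ) ⊗ₖ X₂) * (A₁ i.1 ⊗ₖ A₂ i.2)ᴴ := by
          rw [hX']
          exact tau_smul (fun i : l₁ × l₂ => A₁ i.1 ⊗ₖ A₂ i.2) _ _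
      _ = ((c : ℝ) : ℂ) • ((∑ i, A₁ i * 1 * (A₁ i)ᴴ) ⊗ₖ (∑ j, A₂ j * X₂ * (A₂ j)ᴴ)) := by
          rw [tensor_kron]
      _ = ((c : ℝ) : ℂ) • ((1 : Matrix n₁ n₁ ℂ) ⊗ₖ (∑ j, A₂ j * X₂ * (A₂ j)ᴴ)) := by
          rw [tau_one A₁ hA₁']
  have hval : frobNorm (∑ i : l₁ × l₂, (A₁ i.1 ⊗ₖ A₂ i.2) * X * (A₁ i.1 ⊗ₖ A₂ i.2)ᴴ)
      = frobNorm (∑ j, A₂ j * X₂ * (A₂ j)ᴴ) := by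
    rw [hτX]
    exact scale_one_kron_frob _
  rw [← hval]
  exact le_csSup
    (Dset_bddAbove (fun i : l₁ × l₂ => A₁ i.1 ⊗ₖ A₂ i.2)
      (kraus_tensor_left A₁ A₂ hA₁ hA₂) (kraus_tensor_right A₁ A₂ hA₁' hA₂') 1)
    ⟨X, hXh, le_of_eq_of_le hXfn hXn, hXtr, rfl⟩

end P2
end Stmt18Aux

namespace Stmt18Aux
open scoped InnerProductSpace
open Kronecker

section P3
variable {n₁ n₂ l₁ l₂ : Type*} [Fintype n₁] [Fintype n₂] [DecidableEq n₁] [DecidableEq n₂]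
  [Fintype l₁] [Fintype l₂]
  (A₁ : l₁ → Matrix n₁ n₁ ℂ) (A₂ : l₂ → Matrix n₂ n₂ ℂ)

lemma st_le_max [Nonempty n₁] [Nonempty n₂]
    (hA₁ : ∑ i, (A₁ i)ᴴ * A₁ i = 1) (hA₁' : ∑ i, A₁ i * (A₁ i)ᴴ = 1)
    (hA₂ : ∑ i, (A₂ i)ᴴ * A₂ i = 1) (hA₂' : ∑ i, A₂ i * (A₂ i)ᴴ = 1) :
    sSup (Dset (fun X : Matrix (n₁ × n₂) (n₁ × n₂) ℂ =>
        ∑ i : l₁ × l₂, (A₁ i.1 ⊗ₖ A₂ i.2) * X * (A₁ i.1 ⊗ₖ A₂ i.2)ᴴ) 1)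
      ≤ max (sSup (Dset (fun X => ∑ i, A₁ i * X * (A₁ i)ᴴ) 1))
          (sSup (Dset (fun X => ∑ j, A₂ j * X * (A₂ j)ᴴ) 1)) := by
  set s₁ := sSup (Dset (fun X => ∑ i, A₁ i * X * (A₁ i)ᴴ) 1) with hs₁
  set s₂ := sSup (Dset (fun X => ∑ j, A₂ j * X * (A₂ j)ᴴ) 1) with hs₂
  have hs₁0 : 0 ≤ s₁ := sSup_Dset_nonneg A₁ hA₁ hA₁' 1
  have hs₂0 : 0 ≤ s₂ := sSup_Dset_nonneg A₂ hA₂ hA₂' 1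
  have hm0 : 0 ≤ max s₁ s₂ := le_trans hs₁0 (le_max_left _ _)
  apply csSup_le ⟨0, zero_mem_Dset (fun i : l₁ × l₂ => A₁ i.1 ⊗ₖ A₂ i.2) 1⟩
  rintro d ⟨Y, hY, hYn, hYt, rfl⟩
  rw [one_mul] at hYt
  have hYtr : Y.trace = 0 := by rw [herm_trace_re hY, hYt, Complex.ofReal_zero]
  set X₁ := ptr2 Y with hX₁
  have hX₁h : X₁.IsHermitian := ptr2_herm hY
  have hX₁t : X₁.trace = 0 := by rw [hX₁, ptr2_trace, hYtr]
  have hcard0 : (0 : ℝ) < (Fintype.card n₂ : ℝ) := by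
    exact_mod_cast Fintype.card_pos
  set r : ℝ := ((Fintype.card n₂ : ℝ))⁻¹ with hr
  set P : Matrix (n₁ × n₂) (n₁ × n₂) ℂ := ((r : ℝ) : ℂ) • (X₁ ⊗ₖ (1 : Matrix n₂ n₂ ℂ)) with hP
  set Q : Matrix (n₁ × n₂) (n₁ × n₂) ℂ := Y - P with hQ
  have hptrP : ptr2 P = X₁ := by
    rw [hP, ptr2_smul, ptr2_kron, Matrix.trace_one, smul_smul]
    rw [show ((r : ℝ) : ℂ) * (Fintype.card n₂ : ℂ) = 1 by
      rw [hr]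
      push_cast
      exact inv_mul_cancel₀ (by exact_mod_cast ne_of_gt hcard0)]
    rw [one_smul]
  have hptrQ : ptr2 Q = 0 := by rw [hQ, ptr2_sub, hptrP, hX₁, sub_self]
  have hPh : P.IsHermitian := herm_real_smul _ (kron_herm hX₁h Matrix.isHermitian_one)
  have hQh : Q.IsHermitian := hY.sub hPh
  have hYPQ : Y = P + Q := by rw [hQ]; abel
  have hinPQ : (⟪toEuc P, toEuc Q⟫_ℂ).re = 0 := by
    rw [hP, inner_smul_kron_one r X₁ Q hptrQ, Complex.zero_re]
  have hYsq : frobNorm Y ^ 2 = frobNorm P ^ 2 + frobNorm Q ^ 2 := by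
    rw [frob_eq, frob_eq (X := P), frob_eq (X := Q), hYPQ, toEuc_add]
    exact pyth_orth hinPQ
  -- the P part
  have hτP : ∑ i : l₁ × l₂, (A₁ i.1 ⊗ₖ A₂ i.2) * P * (A₁ i.1 ⊗ₖ A₂ i.2)ᴴ
      = ((r : ℝ) : ℂ) • ((∑ i, A₁ i * X₁ * (A₁ i)ᴴ) ⊗ₖ (1 : Matrix n₂ n₂ ℂ)) := by
    calc ∑ i : l₁ × l₂, (A₁ i.1 ⊗ₖ A₂ i.2) * P * (A₁ i.1 ⊗ₖ A₂ i.2)ᴴ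
        = ((r : ℝ) : ℂ) • ∑ i : l₁ × l₂,
            (A₁ i.1 ⊗ₖ A₂ i.2) * (X₁ ⊗ₖ (1 : Matrix n₂ n₂ ℂ)) * (A₁ i.1 ⊗ₖ A₂ i.2)ᴴ := by
          rw [hP]
          exact tau_smul (fun i : l₁ × l₂ => A₁ i.1 ⊗ₖ A₂ i.2) _ _
      _ = ((r : ℝ) : ℂ) • ((∑ i, A₁ i * X₁ * (A₁ i)ᴴ) ⊗ₖ (∑ j, A₂ j * 1 * (A₂ j)ᴴ)) := by
          rw [tensor_kron]
      _ = ((r : ℝ) : ℂ) • ((∑ i, A₁ i * X₁ * (A₁ i)ᴴ) ⊗ₖ (1 : Matrix n₂ n₂ ℂ)) := by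
          rw [tau_one A₂ hA₂']
  have hτP_le : frobNorm (∑ i : l₁ × l₂, (A₁ i.1 ⊗ₖ A₂ i.2) * P * (A₁ i.1 ⊗ₖ A₂ i.2)ᴴ)
      ≤ s₁ * frobNorm P := by
    rw [hτP, hP, frob_smul, frob_smul, frob_kron, frob_kron]
    have hb := herm_traceless_bound A₁ hA₁ hA₁' hX₁h hX₁t
    rw [← hs₁] at hb
    have h1 : (0:ℝ) ≤ ‖((r : ℝ) : ℂ)‖ := norm_nonneg _
    have h2 : (0:ℝ) ≤ frobNorm (1 : Matrix n₂ n₂ ℂ) := frob_nonneg _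
    calc ‖((r : ℝ) : ℂ)‖ * (frobNorm (∑ i, A₁ i * X₁ * (A₁ i)ᴴ) * frobNorm (1 : Matrix n₂ n₂ ℂ))
        ≤ ‖((r : ℝ) : ℂ)‖ * ((s₁ * frobNorm X₁) * frobNorm (1 : Matrix n₂ n₂ ℂ)) :=
          mul_le_mul_of_nonneg_left (mul_le_mul_of_nonneg_right hb h2) h1
      _ = s₁ * (‖((r : ℝ) : ℂ)‖ * (frobNorm X₁ * frobNorm (1 : Matrix n₂ n₂ ℂ))) := by ring
  -- the Q part
  have hτQ_le : frobNorm (∑ i : l₁ × l₂, (A₁ i.1 ⊗ₖ A₂ i.2) * Q * (A₁ i.1 ⊗ₖ A₂ i.2)ᴴ)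
      ≤ s₂ * frobNorm Q := by
    rw [tensor_factor A₁ A₂ Q]
    calc frobNorm (∑ i : l₁, (A₁ i ⊗ₖ (1 : Matrix n₂ n₂ ℂ)) *
            (∑ j : l₂, ((1 : Matrix n₁ n₁ ℂ) ⊗ₖ A₂ j) * Q * ((1 : Matrix n₁ n₁ ℂ) ⊗ₖ A₂ j)ᴴ) *
            (A₁ i ⊗ₖ (1 : Matrix n₂ n₂ ℂ))ᴴ)
        ≤ frobNorm (∑ j : l₂, ((1 : Matrix n₁ n₁ ℂ) ⊗ₖ A₂ j) * Q *
            ((1 : Matrix n₁ n₁ ℂ) ⊗ₖ A₂ j)ᴴ) :=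
          contraction _ (kraus_sigma1_left A₁ hA₁) (kraus_sigma1_right A₁ hA₁') _
      _ ≤ s₂ * frobNorm Q := sigma2_block_bound A₂ hA₂ hA₂' hptrQ
  -- output orthogonality
  have hptrτQ : ptr2 (∑ i : l₁ × l₂, (A₁ i.1 ⊗ₖ A₂ i.2) * Q * (A₁ i.1 ⊗ₖ A₂ i.2)ᴴ) = 0 := by
    rw [ptr2_tensor A₁ A₂ hA₂ Q, hptrQ]
    exact tau_zero A₁
  have houtPQ : (⟪toEuc (∑ i : l₁ × l₂, (A₁ i.1 ⊗ₖ A₂ i.2) * P * (A₁ i.1 ⊗ₖ A₂ i.2)ᴴ),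
      toEuc (∑ i : l₁ × l₂, (A₁ i.1 ⊗ₖ A₂ i.2) * Q * (A₁ i.1 ⊗ₖ A₂ i.2)ᴴ)⟫_ℂ).re = 0 := by
    rw [hτP, inner_smul_kron_one r _ _ hptrτQ, Complex.zero_re]
  -- combine
  have hτY : ∑ i : l₁ × l₂, (A₁ i.1 ⊗ₖ A₂ i.2) * Y * (A₁ i.1 ⊗ₖ A₂ i.2)ᴴ
      = (∑ i : l₁ × l₂, (A₁ i.1 ⊗ₖ A₂ i.2) * P * (A₁ i.1 ⊗ₖ A₂ i.2)ᴴ)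
        + ∑ i : l₁ × l₂, (A₁ i.1 ⊗ₖ A₂ i.2) * Q * (A₁ i.1 ⊗ₖ A₂ i.2)ᴴ := by
    conv_lhs => rw [hYPQ]
    exact tau_add (fun i : l₁ × l₂ => A₁ i.1 ⊗ₖ A₂ i.2) P Q
  have hsq : frobNorm (∑ i : l₁ × l₂, (A₁ i.1 ⊗ₖ A₂ i.2) * Y * (A₁ i.1 ⊗ₖ A₂ i.2)ᴴ) ^ 2
      ≤ (max s₁ s₂) ^ 2 := by
    rw [hτY, frob_eq, toEuc_add, pyth_orth houtPQ, ← frob_eq, ← frob_eq]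
    have e1 := pow_le_pow_left₀ (frob_nonneg _) hτP_le 2
    have e2 := pow_le_pow_left₀ (frob_nonneg _) hτQ_le 2
    have hle1 : s₁ ^ 2 ≤ (max s₁ s₂) ^ 2 := pow_le_pow_left₀ hs₁0 (le_max_left _ _) 2
    have hle2 : s₂ ^ 2 ≤ (max s₁ s₂) ^ 2 := pow_le_pow_left₀ hs₂0 (le_max_right _ _) 2
    have hY2 : frobNorm Y ^ 2 ≤ 1 := by
      have := pow_le_pow_left₀ (frob_nonneg Y) hYn 2
      rwa [one_pow] at this
    calc frobNorm (∑ i : l₁ × l₂, (A₁ i.1 ⊗ₖ A₂ i.2) * P * (A₁ i.1 ⊗ₖ A₂ i.2)ᴴ) ^ 2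
          + frobNorm (∑ i : l₁ × l₂, (A₁ i.1 ⊗ₖ A₂ i.2) * Q * (A₁ i.1 ⊗ₖ A₂ i.2)ᴴ) ^ 2
        ≤ (s₁ * frobNorm P) ^ 2 + (s₂ * frobNorm Q) ^ 2 := add_le_add e1 e2
      _ ≤ (max s₁ s₂) ^ 2 * (frobNorm P ^ 2 + frobNorm Q ^ 2) := by
          have u1 := mul_nonneg (sub_nonneg.mpr hle1) (sq_nonneg (frobNorm P))
          have u2 := mul_nonneg (sub_nonneg.mpr hle2) (sq_nonneg (frobNorm Q))
          nlinarith
      _ = (max s₁ s₂) ^ 2 * frobNorm Y ^ 2 := by rw [hYsq]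
      _ ≤ (max s₁ s₂) ^ 2 := by nlinarith [sq_nonneg (max s₁ s₂)]
  exact le_of_sq_le_sq hm0 hsq (frob_nonneg _)

end P3
end Stmt18Aux

/-- Let τ₁, τ₂ be bi-quantum channels.  Then the tensor product channel
τ₁ ⊗ τ₂ (with Kraus operators the Kronecker products) is a bi-quantum channel, and
σ₂(τ₁ ⊗ τ₂) = max(σ₂(τ₁), σ₂(τ₂)). -/
theorem stmt_18 {n₁ n₂ l₁ l₂ : ℕ} (hn₁ : 0 < n₁) (hn₂ : 0 < n₂)
    (A₁ : Fin l₁ → Matrix (Fin n₁) (Fin n₁) ℂ)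
    (A₂ : Fin l₂ → Matrix (Fin n₂) (Fin n₂) ℂ)
    (hA₁ : ∑ i, (A₁ i)ᴴ * A₁ i = 1) (hA₁' : ∑ i, A₁ i * (A₁ i)ᴴ = 1)
    (hA₂ : ∑ i, (A₂ i)ᴴ * A₂ i = 1) (hA₂' : ∑ i, A₂ i * (A₂ i)ᴴ = 1) :
    (∑ i : Fin l₁ × Fin l₂, (A₁ i.1 ⊗ₖ A₂ i.2)ᴴ * (A₁ i.1 ⊗ₖ A₂ i.2) = 1) ∧
    (∑ i : Fin l₁ × Fin l₂, (A₁ i.1 ⊗ₖ A₂ i.2) * (A₁ i.1 ⊗ₖ A₂ i.2)ᴴ = 1) ∧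
    sigma2 (fun X : Matrix (Fin n₁ × Fin n₂) (Fin n₁ × Fin n₂) ℂ =>
        ∑ i : Fin l₁ × Fin l₂, (A₁ i.1 ⊗ₖ A₂ i.2) * X * (A₁ i.1 ⊗ₖ A₂ i.2)ᴴ) =
      max (sigma2 (fun X => ∑ i, A₁ i * X * (A₁ i)ᴴ))
        (sigma2 (fun X => ∑ i, A₂ i * X * (A₂ i)ᴴ)) := by
  haveI : Nonempty (Fin n₁) := Fin.pos_iff_nonempty.mp hn₁
  haveI : Nonempty (Fin n₂) := Fin.pos_iff_nonempty.mp hn₂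
  refine ⟨Stmt18Aux.kraus_tensor_left A₁ A₂ hA₁ hA₂,
    Stmt18Aux.kraus_tensor_right A₁ A₂ hA₁' hA₂', ?_⟩
  have e0 : sigma2 (fun X : Matrix (Fin n₁ × Fin n₂) (Fin n₁ × Fin n₂) ℂ =>
      ∑ i : Fin l₁ × Fin l₂, (A₁ i.1 ⊗ₖ A₂ i.2) * X * (A₁ i.1 ⊗ₖ A₂ i.2)ᴴ)
      = sSup (Stmt18Aux.Dset (fun X : Matrix (Fin n₁ × Fin n₂) (Fin n₁ × Fin n₂) ℂ =>
          ∑ i : Fin l₁ × Fin l₂, (A₁ i.1 ⊗ₖ A₂ i.2) * X * (A₁ i.1 ⊗ₖ A₂ i.2)ᴴ) 1) :=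
    Stmt18Aux.sigma2_eq_sSup (fun i : Fin l₁ × Fin l₂ => A₁ i.1 ⊗ₖ A₂ i.2)
      (Stmt18Aux.kraus_tensor_left A₁ A₂ hA₁ hA₂)
      (Stmt18Aux.kraus_tensor_right A₁ A₂ hA₁' hA₂')
  have e1 : sigma2 (fun X => ∑ i, A₁ i * X * (A₁ i)ᴴ)
      = sSup (Stmt18Aux.Dset (fun X => ∑ i, A₁ i * X * (A₁ i)ᴴ) 1) :=
    Stmt18Aux.sigma2_eq_sSup A₁ hA₁ hA₁'
  have e2 : sigma2 (fun X => ∑ i, A₂ i * X * (A₂ i)ᴴ)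
      = sSup (Stmt18Aux.Dset (fun X => ∑ i, A₂ i * X * (A₂ i)ᴴ) 1) :=
    Stmt18Aux.sigma2_eq_sSup A₂ hA₂ hA₂'
  rw [e0, e1, e2]
  apply le_antisymm (Stmt18Aux.st_le_max A₁ A₂ hA₁ hA₁' hA₂ hA₂')
  exact max_le (Stmt18Aux.s1_le_st A₁ A₂ hA₁ hA₁' hA₂ hA₂')
    (Stmt18Aux.s2_le_st A₁ A₂ hA₁ hA₁' hA₂ hA₂')
end
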